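/- arXiv:2404.08357 — 5 statements merged into one kernel-verified Lean document; each statement's English description precedes it below -/
import Mathlib

section
/- Let (a,δ),(b,ε) ∈ K̄×Λ and set μ = res_K(v_{a,δ}) and η = res_K(v_{b,ε}). If μ < η (i.e., μ(f) ≤ η(f) for all f ∈ K[x] and μ ≠ η), then δ < ε. -/
open Polynomial

noncomputable section

variable {K Λ : Type*} [Field K] [AddCommGroup Λ] [LinearOrder Λ] [IsOrderedAddMonoid Λ]

/-- `v` is a `Λ∪{∞}`-valued valuation (written additively) on the algebraic closure of `K`
with trivial support: `v b = ⊤ ↔ b = 0`. -/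
structure IsValOnField (v : AlgebraicClosure K → WithTop Λ) : Prop where
  map_mul : ∀ a b, v (a * b) = v a + v b
  min_le_add : ∀ a b, min (v a) (v b) ≤ v (a + b)
  eq_top_iff : ∀ a, v a = ⊤ ↔ a = 0

/-- A valuation on `K[x]` with trivial support whose restriction to `K` is `v`. -/
structure IsValOnPoly (v : AlgebraicClosure K → WithTop Λ)
    (μ : Polynomial K → WithTop Λ) : Prop where
  map_mul : ∀ f g, μ (f * g) = μ f + μ g
  min_le_add : ∀ f g, min (μ f) (μ g) ≤ μ (f + g)
  eq_top_iff : ∀ f, μ f = ⊤ ↔ f = 0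
  extends_v : ∀ c : K, μ (C c) = v (algebraMap K (AlgebraicClosure K) c)

/-- A valuation on `K̄[x]` with trivial support whose restriction to `K̄` is `v`. -/
structure IsValOnPolyBar (v : AlgebraicClosure K → WithTop Λ)
    (ν : Polynomial (AlgebraicClosure K) → WithTop Λ) : Prop where
  map_mul : ∀ f g, ν (f * g) = ν f + ν g
  min_le_add : ∀ f g, min (ν f) (ν g) ≤ ν (f + g)
  eq_top_iff : ∀ f, ν f = ⊤ ↔ f = 0
  extends_v : ∀ c : AlgebraicClosure K, ν (C c) = v c

/-- Restriction `res_K(ν)` of a valuation `ν` on `K̄[x]` to `K[x]`. -/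
def resK (ν : Polynomial (AlgebraicClosure K) → WithTop Λ) :
    Polynomial K → WithTop Λ :=
  fun f => ν (f.map (algebraMap K (AlgebraicClosure K)))

/-- The monomial valuation `v_{a,δ}` on `K̄[x]`:
`v_{a,δ}(Σ c_k (x−a)^k) = min_k (v(c_k) + kδ)`. -/
def monoVal (v : AlgebraicClosure K → WithTop Λ) (a : AlgebraicClosure K) (δ : Λ) :
    Polynomial (AlgebraicClosure K) → WithTop Λ :=
  fun f => (Finset.range (f.natDegree + 1)).inf
    fun k => v ((taylor a f).coeff k) + ((k • δ : Λ) : WithTop Λ)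

/-- The closed ball `B(a,δ) = {b ∈ K̄ : v(b−a) ≥ δ}`. -/
def cBall (v : AlgebraicClosure K → WithTop Λ) (a : AlgebraicClosure K) (δ : Λ) :
    Set (AlgebraicClosure K) := {b | (δ : WithTop Λ) ≤ v (b - a)}

/-- The open ball `B°(a,δ) = {b ∈ K̄ : v(b−a) > δ}`. -/
def oBall (v : AlgebraicClosure K → WithTop Λ) (a : AlgebraicClosure K) (δ : Λ) :
    Set (AlgebraicClosure K) := {b | (δ : WithTop Λ) < v (b - a)}

/-- The decomposition group `𝒟 = {σ ∈ Aut(K̄/K) : v ∘ σ = v}`. -/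
def decompGroup (v : AlgebraicClosure K → WithTop Λ) :
    Set (AlgebraicClosure K ≃ₐ[K] AlgebraicClosure K) := {σ | ∀ a, v (σ a) = v a}

/-- `deg_K c`, the degree of the minimal polynomial of `c` over `K`. -/
def degK (K : Type*) [Field K] (c : AlgebraicClosure K) : ℕ := (minpoly K c).natDegree

/-- `deg_K S = min {deg_K c : c ∈ S}`. -/
def degKSet (K : Type*) [Field K] (S : Set (AlgebraicClosure K)) : ℕ := sInf (degK K '' S)

/-- `Min_K S = {c ∈ S : deg_K c = deg_K S}`. -/
def MinK (K : Type*) [Field K] (S : Set (AlgebraicClosure K)) : Set (AlgebraicClosure K) :=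
  {c ∈ S | degK K c = degKSet K S}

/-- Pointwise order on valuations on a polynomial ring. -/
def valLE {R : Type*} [Semiring R] (μ η : Polynomial R → WithTop Λ) : Prop := ∀ f, μ f ≤ η f

/-- Strict pointwise order on valuations. -/
def valLT {R : Type*} [Semiring R] (μ η : Polynomial R → WithTop Λ) : Prop := valLE μ η ∧ μ ≠ η

/-- `Λ` is a divisible group. -/
def IsDivisible (Λ : Type*) [AddCommGroup Λ] : Prop :=
  ∀ (γ : Λ) (n : ℕ), 0 < n → ∃ γ', n • γ' = γ

/-- `IsEpsilon μ f e` says that `e = ε_μ(f) = max {(μ(f) − μ(∂_s f))/s : s ≥ 1, ∂_s f ≠ 0}`,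
where `∂_s` is the `s`-th Hasse–Schmidt derivative. It is expressed without division:
`μ f ≤ s•e + μ(∂_s f)` for all admissible `s`, with equality for at least one `s`. -/
def IsEpsilon (μ : Polynomial K → WithTop Λ) (f : Polynomial K) (e : Λ) : Prop :=
  (∀ s : ℕ, 1 ≤ s → hasseDeriv s f ≠ 0 →
      μ f ≤ ((s • e : Λ) : WithTop Λ) + μ (hasseDeriv s f)) ∧
  (∃ s : ℕ, 1 ≤ s ∧ hasseDeriv s f ≠ 0 ∧
      μ f = ((s • e : Λ) : WithTop Λ) + μ (hasseDeriv s f))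

/-- `Q` is an abstract key polynomial for `μ`: `Q` is monic and `ε_μ(f) < ε_μ(Q)` for every
nonconstant `f` of degree smaller than `deg Q`. -/
def IsAbstractKeyPol (μ : Polynomial K → WithTop Λ) (Q : Polynomial K) : Prop :=
  Q.Monic ∧ ∀ f : Polynomial K, 0 < f.natDegree → f.natDegree < Q.natDegree →
    ∀ e eQ : Λ, IsEpsilon μ f e → IsEpsilon μ Q eQ → e < eQ


section LtRadiusProofSection
namespace LtRadiusProof

variable {v : AlgebraicClosure K → WithTop Λ}

theorem v_zero (hv : IsValOnField v) : v 0 = ⊤ := (hv.eq_top_iff 0).2 rfl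

theorem v_ne_top (hv : IsValOnField v) {x : AlgebraicClosure K} (hx : x ≠ 0) : v x ≠ ⊤ :=
  fun h => hx ((hv.eq_top_iff x).1 h)

theorem v_one (hv : IsValOnField v) : v 1 = 0 := by
  have h := hv.map_mul 1 1
  rw [mul_one] at h
  have h1 : v (1 : AlgebraicClosure K) ≠ ⊤ := v_ne_top hv one_ne_zero
  lift v (1 : AlgebraicClosure K) to Λ using h1 with x hx
  rw [← WithTop.coe_add, WithTop.coe_eq_coe] at h
  have hx0 : x = 0 := left_eq_add.mp h
  exact_mod_cast congrArg (fun y : Λ => (y : WithTop Λ)) hx0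

theorem v_neg_one (hv : IsValOnField v) : v (-1) = 0 := by
  have h := hv.map_mul (-1) (-1)
  rw [neg_one_mul, neg_neg, v_one hv] at h
  have h1 : v (-1 : AlgebraicClosure K) ≠ ⊤ := v_ne_top hv (by norm_num)
  lift v (-1 : AlgebraicClosure K) to Λ using h1 with x hx
  rw [← WithTop.coe_add] at h
  have hxx : x + x = 0 := by
    have := h.symm
    rwa [← WithTop.coe_zero, WithTop.coe_eq_coe] at this
  have hx0 : x = 0 := by
    have hneg : -x = x := neg_eq_of_add_eq_zero_left hxx
    rcases lt_trichotomy x 0 with hlt | heq | hgt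
    · exact absurd (hneg ▸ neg_pos.mpr hlt) (asymm hlt)
    · exact heq
    · exact absurd (hneg ▸ neg_neg_iff_pos.mpr hgt) (asymm hgt)
  exact_mod_cast congrArg (fun y : Λ => (y : WithTop Λ)) hx0

theorem v_neg (hv : IsValOnField v) (x : AlgebraicClosure K) : v (-x) = v x := by
  have := hv.map_mul (-1) x
  rw [neg_one_mul, v_neg_one hv, zero_add] at this
  exact this

/-- if `v y < v x` then `v (x + y) = v y`. -/
theorem v_add_eq (hv : IsValOnField v) {x y : AlgebraicClosure K} (h : v y < v x) :
    v (x + y) = v y := by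
  have h1 : v y ≤ v (x + y) := by
    have := hv.min_le_add x y
    rwa [min_eq_right h.le] at this
  refine le_antisymm ?_ h1
  by_contra hlt
  push_neg at hlt
  have : v y = v (x + y + -x) := by ring_nf
  rw [this] at hlt h
  have hge := hv.min_le_add (x + y) (-x)
  rw [v_neg hv] at hge
  have : v (x + y + -x) < min (v (x + y)) (v x) := lt_min hlt h
  exact absurd hge (not_le.mpr this)

theorem v_pow (hv : IsValOnField v) (x : AlgebraicClosure K) (n : ℕ) :
    v (x ^ n) = n • v x := by
  induction n with
  | zero => simpa using v_one hv
  | succ n ih =>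
    rw [pow_succ, hv.map_mul, ih, succ_nsmul]

theorem v_natCast_nonneg (hv : IsValOnField v) (n : ℕ) : 0 ≤ v (n : AlgebraicClosure K) := by
  induction n with
  | zero => simp [v_zero hv]
  | succ n ih =>
    push_cast
    refine le_trans ?_ (hv.min_le_add n 1)
    rw [v_one hv]
    exact le_min ih le_rfl

theorem v_sum_ge (hv : IsValOnField v) {ι : Type*} (s : Finset ι) (f : ι → AlgebraicClosure K)
    {c : WithTop Λ} (h : ∀ i ∈ s, c ≤ v (f i)) : c ≤ v (∑ i ∈ s, f i) := by
  classical
  induction s using Finset.induction with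
  | empty => simp [v_zero hv]
  | insert _ _ hnot ih =>
    rename_i j s'
    rw [Finset.sum_insert hnot]
    refine le_trans ?_ (hv.min_le_add _ _)
    exact le_min (h j (Finset.mem_insert_self _ _))
      (ih fun i hi => h i (Finset.mem_insert_of_mem hi))

theorem v_sum_gt (hv : IsValOnField v) {ι : Type*} (s : Finset ι) (f : ι → AlgebraicClosure K)
    {c : WithTop Λ} (hc : c ≠ ⊤) (h : ∀ i ∈ s, c < v (f i)) : c < v (∑ i ∈ s, f i) := by
  classical
  induction s using Finset.induction with
  | empty => simpa [v_zero hv] using lt_top_iff_ne_top.mpr hc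
  | insert _ _ hnot ih =>
    rename_i j s'
    rw [Finset.sum_insert hnot]
    refine lt_of_lt_of_le ?_ (hv.min_le_add _ _)
    exact lt_min (h j (Finset.mem_insert_self _ _))
      (ih fun i hi => h i (Finset.mem_insert_of_mem hi))

theorem v_multiset_prod (hv : IsValOnField v) (M : Multiset (AlgebraicClosure K)) :
    v M.prod = (M.map v).sum := by
  induction M using Multiset.induction with
  | empty => simpa using v_one hv
  | cons x M ih => simp [hv.map_mul, ih]

/-- In a sum of elements that is zero, the minimal valuation is attained at least twice. -/
theorem exists_second_min (hv : IsValOnField v) {ι : Type*} [DecidableEq ι] (s : Finset ι)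
    (t : ι → AlgebraicClosure K) (hsum : ∑ i ∈ s, t i = 0) {j₀ : ι} (hj₀ : j₀ ∈ s)
    (hmin : ∀ i ∈ s, v (t j₀) ≤ v (t i)) (hfin : v (t j₀) ≠ ⊤) :
    ∃ j₁ ∈ s, j₁ ≠ j₀ ∧ v (t j₁) = v (t j₀) := by
  have hT : ∑ i ∈ s.erase j₀, t i = - t j₀ := by
    have h2 := Finset.sum_erase_add s t hj₀
    rw [hsum] at h2
    exact eq_neg_of_add_eq_zero_left h2
  have hne : (s.erase j₀).Nonempty := by
    rcases Finset.eq_empty_or_nonempty (s.erase j₀) with he | hne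
    · exfalso
      rw [he, Finset.sum_empty] at hT
      have : v (t j₀) = ⊤ := by
        rw [← v_neg hv, ← hT, v_zero hv]
      exact hfin this
    · exact hne
  obtain ⟨j₁, hj₁, hmin1⟩ := Finset.exists_min_image (s.erase j₀) (fun i => v (t i)) hne
  refine ⟨j₁, Finset.mem_of_mem_erase hj₁, Finset.ne_of_mem_erase hj₁, ?_⟩
  have h1 : v (t j₀) ≤ v (t j₁) := hmin _ (Finset.mem_of_mem_erase hj₁)
  have h2 : v (t j₁) ≤ v (t j₀) := by
    have heq : v (t j₀) = v (∑ i ∈ s.erase j₀, t i) := by rw [hT, v_neg hv]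
    rw [heq]
    exact v_sum_ge hv _ _ fun i hi => hmin1 i hi
  exact le_antisymm h2 h1


-- WithTop helpers
theorem nsmul_ne_top {A : WithTop Λ} (hA : A ≠ ⊤) (N : ℕ) : N • A ≠ ⊤ := by
  induction N with
  | zero => simp
  | succ N ih =>
    rw [succ_nsmul]
    exact WithTop.add_ne_top.mpr ⟨ih, hA⟩

theorem nsmul_top_eq {N : ℕ} (hN : N ≠ 0) : (N • (⊤ : WithTop Λ)) = ⊤ := by
  obtain ⟨M, rfl⟩ := Nat.exists_eq_succ_of_ne_zero hN
  rw [succ_nsmul]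
  exact add_top _

theorem coe_nsmul (x : Λ) (N : ℕ) : (N • ((x : WithTop Λ))) = ((N • x : Λ) : WithTop Λ) := by
  induction N with
  | zero => simp
  | succ N ih => rw [succ_nsmul, succ_nsmul, ih, WithTop.coe_add]

theorem nsmul_lt_nsmul_wt {A B : WithTop Λ} (hA : A ≠ ⊤) (h : A < B) {N : ℕ} (hN : N ≠ 0) :
    N • A < N • B := by
  lift A to Λ using hA with x
  rcases eq_or_ne B ⊤ with rfl | hB
  · rw [nsmul_top_eq hN]
    exact lt_top_iff_ne_top.mpr (nsmul_ne_top WithTop.coe_ne_top N)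
  · lift B to Λ using hB with y
    rw [coe_nsmul, coe_nsmul, WithTop.coe_lt_coe]
    by_contra hc
    push_neg at hc
    have := le_of_nsmul_le_nsmul_right hN hc
    rw [WithTop.coe_lt_coe] at h
    exact absurd this (not_le.mpr h)

theorem nsmul_le_nsmul_wt {A B : WithTop Λ} (h : A ≤ B) (N : ℕ) : N • A ≤ N • B := by
  induction N with
  | zero => simp
  | succ N ih =>
    rw [succ_nsmul, succ_nsmul]
    exact add_le_add ih h

theorem add_lt_add_of_lt_of_le_wt {a b x y : WithTop Λ} (ha : a ≠ ⊤) (hb : b ≠ ⊤)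
    (h1 : a < x) (h2 : b ≤ y) : a + b < x + y := by
  calc a + b < x + b := WithTop.add_lt_add_right hb h1
    _ ≤ x + y := add_le_add_right h2 x

theorem add_lt_add_of_le_of_lt_wt {a b x y : WithTop Λ} (ha : a ≠ ⊤) (hb : b ≠ ⊤)
    (h1 : a ≤ x) (h2 : b < y) : a + b < x + y := by
  calc a + b < a + y := WithTop.add_lt_add_left ha h2
    _ ≤ x + y := add_le_add_left h1 y


/-- weighted coefficient value -/
def wc (v : AlgebraicClosure K → WithTop Λ) (a : AlgebraicClosure K) (δ : Λ)
    (P : Polynomial (AlgebraicClosure K)) (k : ℕ) : WithTop Λ :=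
  v ((taylor a P).coeff k) + ((k • δ : Λ) : WithTop Λ)

theorem monoVal_def (a : AlgebraicClosure K) (δ : Λ) (P : Polynomial (AlgebraicClosure K)) :
    monoVal v a δ P = (Finset.range (P.natDegree + 1)).inf (wc v a δ P) := rfl

variable {a : AlgebraicClosure K} {δ : Λ}

theorem wc_top (hv : IsValOnField v) {P : Polynomial (AlgebraicClosure K)} {k : ℕ}
    (h : P.natDegree < k) : wc v a δ P k = ⊤ := by
  have hc : (taylor a P).coeff k = 0 :=
    coeff_eq_zero_of_natDegree_lt (by rwa [natDegree_taylor])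
  rw [wc, hc, v_zero hv, top_add]

theorem monoVal_le_wc (hv : IsValOnField v) (P : Polynomial (AlgebraicClosure K)) (k : ℕ) :
    monoVal v a δ P ≤ wc v a δ P k := by
  rcases le_or_gt k P.natDegree with h | h
  · exact Finset.inf_le (Finset.mem_range.mpr (Nat.lt_succ_of_le h))
  · rw [wc_top hv h]; exact le_top

theorem le_monoVal {P : Polynomial (AlgebraicClosure K)} {c : WithTop Λ}
    (h : ∀ k, c ≤ wc v a δ P k) : c ≤ monoVal v a δ P :=
  Finset.le_inf fun k _ => h k

theorem monoVal_exists (P : Polynomial (AlgebraicClosure K)) :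
    ∃ k ≤ P.natDegree, monoVal v a δ P = wc v a δ P k := by
  obtain ⟨k, hk, he⟩ := Finset.exists_mem_eq_inf (Finset.range (P.natDegree + 1))
    ⟨0, Finset.mem_range.mpr (Nat.succ_pos _)⟩ (wc v a δ P)
  exact ⟨k, Nat.lt_succ_iff.mp (Finset.mem_range.mp hk), he⟩

theorem taylor_ne_zero {P : Polynomial (AlgebraicClosure K)} (hP : P ≠ 0) :
    taylor a P ≠ 0 := by
  intro h
  apply hP
  have := congrArg (taylor (-a)) h
  rwa [taylor_taylor, neg_add_cancel, taylor_zero, map_zero] at this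

theorem monoVal_ne_top (hv : IsValOnField v) {P : Polynomial (AlgebraicClosure K)}
    (hP : P ≠ 0) : monoVal v a δ P ≠ ⊤ := by
  intro h
  have hle := monoVal_le_wc (a := a) (δ := δ) hv P P.natDegree
  rw [h, top_le_iff] at hle
  have hc : (taylor a P).coeff P.natDegree ≠ 0 := by
    rw [← natDegree_taylor P a, coeff_natDegree]
    exact leadingCoeff_ne_zero.mpr (taylor_ne_zero hP)
  exact (WithTop.add_ne_top.mpr ⟨v_ne_top hv hc, WithTop.coe_ne_top⟩) hle

theorem monoVal_le_eval (hv : IsValOnField v) (P : Polynomial (AlgebraicClosure K)) :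
    monoVal v a δ P ≤ v (P.eval a) := by
  have := monoVal_le_wc (a := a) (δ := δ) hv P 0
  rwa [wc, taylor_coeff_zero, zero_nsmul, WithTop.coe_zero, add_zero] at this

theorem monoVal_C (hv : IsValOnField v) (γ : AlgebraicClosure K) :
    monoVal v a δ (C γ) = v γ := by
  rw [monoVal_def]
  have : (C γ).natDegree = 0 := natDegree_C γ
  rw [this]
  simp [wc, taylor_C]

theorem monoVal_one (hv : IsValOnField v) : monoVal v a δ 1 = 0 := by
  simpa [v_one hv] using monoVal_C (a := a) (δ := δ) hv 1

theorem taylor_mul (r : AlgebraicClosure K) (P Q : Polynomial (AlgebraicClosure K)) :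
    taylor r (P * Q) = taylor r P * taylor r Q := by
  simp [taylor_apply, mul_comp]

theorem taylor_pow (r : AlgebraicClosure K) (P : Polynomial (AlgebraicClosure K)) (n : ℕ) :
    taylor r (P ^ n) = (taylor r P) ^ n := by
  simp [taylor_apply, pow_comp]

theorem coe_nsmul_add {i j : ℕ} :
    (((i + j) • δ : Λ) : WithTop Λ) = ((i • δ : Λ) : WithTop Λ) + ((j • δ : Λ) : WithTop Λ) := by
  rw [add_nsmul, WithTop.coe_add]

theorem wc_mul_ge (hv : IsValOnField v) (P Q : Polynomial (AlgebraicClosure K)) (k : ℕ) :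
    monoVal v a δ P + monoVal v a δ Q ≤ wc v a δ (P * Q) k := by
  rw [wc, taylor_mul, coeff_mul]
  have hne : (Finset.HasAntidiagonal.antidiagonal k).Nonempty := ⟨(0, k), by simp⟩
  obtain ⟨⟨i₀, j₀⟩, hmem, hmin⟩ := Finset.exists_min_image (Finset.HasAntidiagonal.antidiagonal k)
    (fun p => v ((taylor a P).coeff p.1 * (taylor a Q).coeff p.2)) hne
  have hsum : v ((taylor a P).coeff i₀ * (taylor a Q).coeff j₀) ≤
      v (∑ x ∈ Finset.HasAntidiagonal.antidiagonal k, (taylor a P).coeff x.1 * (taylor a Q).coeff x.2) :=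
    v_sum_ge hv _ _ fun p hp => hmin p hp
  have hij : i₀ + j₀ = k := Finset.HasAntidiagonal.mem_antidiagonal.mp hmem
  calc monoVal v a δ P + monoVal v a δ Q
      ≤ wc v a δ P i₀ + wc v a δ Q j₀ :=
        add_le_add (monoVal_le_wc hv P i₀) (monoVal_le_wc hv Q j₀)
    _ = v ((taylor a P).coeff i₀ * (taylor a Q).coeff j₀) + ((k • δ : Λ) : WithTop Λ) := by
        rw [wc, wc, hv.map_mul, ← hij, coe_nsmul_add]
        exact add_add_add_comm _ _ _ _
    _ ≤ _ := add_le_add_left hsum _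

theorem monoVal_mul_ge (hv : IsValOnField v) (P Q : Polynomial (AlgebraicClosure K)) :
    monoVal v a δ P + monoVal v a δ Q ≤ monoVal v a δ (P * Q) :=
  le_monoVal fun k => wc_mul_ge hv P Q k

theorem monoVal_multiset_prod_ge (hv : IsValOnField v)
    (M : Multiset (Polynomial (AlgebraicClosure K))) :
    (M.map (monoVal v a δ)).sum ≤ monoVal v a δ M.prod := by
  induction M using Multiset.induction with
  | empty => simp [monoVal_one hv]
  | cons P M ih =>
    rw [Multiset.map_cons, Multiset.sum_cons, Multiset.prod_cons]
    exact le_trans (add_le_add_right ih _) (monoVal_mul_ge hv P M.prod)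



/-- Fact 1: `V(P) ≤ s•δ + V(∂ₛ P)`. -/
theorem fact1 (hv : IsValOnField v) (P : Polynomial (AlgebraicClosure K)) (s : ℕ) :
    monoVal v a δ P ≤ ((s • δ : Λ) : WithTop Λ) + monoVal v a δ (hasseDeriv s P) := by
  obtain ⟨k, hk, he⟩ := monoVal_exists (v := v) (a := a) (δ := δ) (hasseDeriv s P)
  rw [he, wc]
  have hc : (taylor a (hasseDeriv s P)).coeff k
      = ((k + s).choose k : AlgebraicClosure K) * ((taylor a P).coeff (k + s)) := by
    rw [taylor_coeff, taylor_coeff]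
    have hcomp := Polynomial.hasseDeriv_comp (R := AlgebraicClosure K) k s
    have hfun : hasseDeriv k (hasseDeriv s P) = (k + s).choose k • hasseDeriv (k + s) P :=
      congrFun (congrArg (fun g => g.toFun) hcomp) P
    rw [hfun]
    simp [nsmul_eq_mul]
  rw [hc, hv.map_mul]
  have h1 : 0 ≤ v (((k + s).choose k : AlgebraicClosure K)) := v_natCast_nonneg hv _
  have h2 : monoVal v a δ P ≤ v ((taylor a P).coeff (k + s)) + (((k • δ : Λ) : WithTop Λ)
      + ((s • δ : Λ) : WithTop Λ)) := by
    have := monoVal_le_wc (a := a) (δ := δ) hv P (k + s)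
    rwa [wc, coe_nsmul_add] at this
  refine le_trans h2 ?_
  have heq : ((s • δ : Λ) : WithTop Λ)
      + (v (((k + s).choose k : AlgebraicClosure K)) + v ((taylor a P).coeff (k + s))
        + ((k • δ : Λ) : WithTop Λ))
      = v (((k + s).choose k : AlgebraicClosure K))
        + (v ((taylor a P).coeff (k + s)) + (((k • δ : Λ) : WithTop Λ)
          + ((s • δ : Λ) : WithTop Λ))) := by
    abel
  rw [heq]
  exact le_add_of_nonneg_left h1


theorem wc_zero (P : Polynomial (AlgebraicClosure K)) :
    wc v a δ P 0 = v ((taylor a P).coeff 0) := by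
  rw [wc, zero_nsmul, WithTop.coe_zero, add_zero]

/-- units (no root in the ball) are stable under powers -/
theorem unit_pow (hv : IsValOnField v) {P : Polynomial (AlgebraicClosure K)} {A : WithTop Λ}
    (hA : A ≠ ⊤) (h0 : v ((taylor a P).coeff 0) = A)
    (hk : ∀ k, 1 ≤ k → A < wc v a δ P k) (N : ℕ) :
    v ((taylor a (P ^ N)).coeff 0) = N • A ∧ ∀ k, 1 ≤ k → N • A < wc v a δ (P ^ N) k := by
  induction N with
  | zero =>
    constructor
    · rw [pow_zero, zero_nsmul]
      have : (taylor a (1 : Polynomial (AlgebraicClosure K))).coeff 0 = 1 := by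
        simp [taylor_one]
      rw [this, v_one hv]
    · intro k hk1
      rw [pow_zero, zero_nsmul]
      have : (taylor a (1 : Polynomial (AlgebraicClosure K))).coeff k = 0 := by
        have hkne : k ≠ 0 := by omega
        simp [taylor_one, coeff_one, hkne]
      rw [wc, this, v_zero hv, top_add]
      exact lt_top_iff_ne_top.mpr (by simp)
  | succ N ih =>
    have hNA : N • A ≠ ⊤ := nsmul_ne_top hA N
    have hsucc : (N + 1) • A = N • A + A := succ_nsmul A N
    constructor
    · rw [pow_succ, taylor_mul, mul_coeff_zero, hv.map_mul, ih.1, h0, hsucc]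
    · intro k hk1
      rw [pow_succ, wc, taylor_mul, coeff_mul]
      have hterm : ∀ p ∈ Finset.HasAntidiagonal.antidiagonal k, (N + 1) • A <
          v ((taylor a (P ^ N)).coeff p.1 * (taylor a P).coeff p.2) + ((k • δ : Λ) : WithTop Λ) := by
        rintro ⟨i, j⟩ hmem
        have hij : i + j = k := Finset.HasAntidiagonal.mem_antidiagonal.mp hmem
        have harr : v ((taylor a (P ^ N)).coeff i * (taylor a P).coeff j)
            + ((k • δ : Λ) : WithTop Λ) = wc v a δ (P ^ N) i + wc v a δ P j := by
          rw [wc, wc, hv.map_mul, ← hij, coe_nsmul_add]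
          exact (add_add_add_comm _ _ _ _).symm
        rw [harr, hsucc]
        rcases Nat.eq_zero_or_pos i with rfl | hi
        · have hj : 1 ≤ j := by omega
          rw [wc_zero, ih.1]
          exact add_lt_add_of_le_of_lt_wt hNA hA le_rfl (hk j hj)
        · have h1 : N • A < wc v a δ (P ^ N) i := ih.2 i hi
          have h2 : A ≤ wc v a δ P j := by
            rcases Nat.eq_zero_or_pos j with rfl | hj
            · rw [wc_zero, h0]
            · exact (hk j hj).le
          exact add_lt_add_of_lt_of_le_wt hNA hA h1 h2
      -- combine: value of the sum is ≥ the min term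
      have hne : (Finset.HasAntidiagonal.antidiagonal k).Nonempty := ⟨(0, k), by simp⟩
      obtain ⟨p₀, hp₀, hminp⟩ := Finset.exists_min_image (Finset.HasAntidiagonal.antidiagonal k)
        (fun p => v ((taylor a (P ^ N)).coeff p.1 * (taylor a P).coeff p.2)) hne
      have hsum := v_sum_ge hv (Finset.HasAntidiagonal.antidiagonal k)
        (fun p => (taylor a (P ^ N)).coeff p.1 * (taylor a P).coeff p.2)
        (c := v ((taylor a (P ^ N)).coeff p₀.1 * (taylor a P).coeff p₀.2))
        (fun p hp => hminp p hp)
      calc (N + 1) • A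
          < v ((taylor a (P ^ N)).coeff p₀.1 * (taylor a P).coeff p₀.2)
            + ((k • δ : Λ) : WithTop Λ) := hterm p₀ hp₀
        _ ≤ _ := add_le_add_left hsum _


/-- `N•(v x)` is in the value group of `K`, for algebraic `x ≠ 0`. -/
theorem exists_N_pi (hv : IsValOnField v) (x : AlgebraicClosure K) (hx : x ≠ 0) :
    ∃ (N : ℕ) (π : K), 1 ≤ N ∧ π ≠ 0 ∧
      v (algebraMap K (AlgebraicClosure K) π) = N • v x := by
  classical
  set φ := algebraMap K (AlgebraicClosure K) with hφ
  have hint : IsIntegral K x := (Algebra.IsIntegral.isIntegral (R := K) x)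
  set p := minpoly K x with hp
  have hp0 : p ≠ 0 := minpoly.ne_zero hint
  set t : ℕ → AlgebraicClosure K := fun i => φ (p.coeff i) * x ^ i with ht
  have hsum : ∑ i ∈ Finset.range (p.natDegree + 1), t i = 0 := by
    have := minpoly.aeval K x
    rw [Polynomial.aeval_eq_sum_range] at this
    simpa [ht, Algebra.smul_def] using this
  have htv : ∀ i, t i ≠ 0 → v (t i) = v (φ (p.coeff i)) + i • v x := by
    intro i _
    rw [ht, hv.map_mul, v_pow hv]
  -- the leading term is nonzero
  have hlead : t p.natDegree ≠ 0 := by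
    apply mul_ne_zero
    · simpa using (Polynomial.leadingCoeff_ne_zero.mpr hp0)
    · exact pow_ne_zero _ hx
  obtain ⟨j₀, hj₀, hj₀min⟩ := Finset.exists_min_image (Finset.range (p.natDegree + 1))
    (fun i => v (t i)) ⟨p.natDegree, Finset.mem_range.mpr (Nat.lt_succ_self _)⟩
  have hj₀fin : v (t j₀) ≠ ⊤ := by
    intro htop
    have := hj₀min p.natDegree (Finset.mem_range.mpr (Nat.lt_succ_self _))
    rw [htop, top_le_iff] at this
    exact v_ne_top hv hlead this
  obtain ⟨j₁, hj₁, hj₁ne, hj₁eq⟩ := exists_second_min hv _ t hsum hj₀ hj₀min hj₀fin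
  -- both coefficients are nonzero
  have htj₁ : t j₁ ≠ 0 := fun h0 => (hj₁eq ▸ hj₀fin) (by rw [h0, v_zero hv])
  have htj₀ : t j₀ ≠ 0 := fun h0 => hj₀fin (by rw [h0, v_zero hv])
  -- arrange i < j
  obtain ⟨i, j, hij, hti, htj, hveq⟩ :
      ∃ i j : ℕ, i < j ∧ t i ≠ 0 ∧ t j ≠ 0 ∧ v (t i) = v (t j) := by
    rcases lt_or_gt_of_ne hj₁ne with hlt | hgt
    · exact ⟨j₁, j₀, hlt, htj₁, htj₀, hj₁eq⟩
    · exact ⟨j₀, j₁, hgt, htj₀, htj₁, hj₁eq.symm⟩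
  have hpi : p.coeff i ≠ 0 := fun h0 => hti (by simp [ht, h0])
  have hpj : p.coeff j ≠ 0 := fun h0 => htj (by simp [ht, h0])
  refine ⟨j - i, p.coeff i / p.coeff j, by omega, div_ne_zero hpi hpj, ?_⟩
  have hvx : v x ≠ ⊤ := v_ne_top hv hx
  have hivx : i • v x ≠ ⊤ := nsmul_ne_top hvx i
  have hsplit : j • v x = i • v x + (j - i) • v x := by
    rw [← add_nsmul]
    congr 1
    omega
  rw [htv i hti, htv j htj] at hveq
  -- v (φ p_i) = v (φ p_j) + (j-i) • v x
  have hkey : v (φ (p.coeff i)) = v (φ (p.coeff j)) + (j - i) • v x := by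
    rw [hsplit] at hveq
    have h2 : v (φ (p.coeff i)) + i • v x
        = (v (φ (p.coeff j)) + (j - i) • v x) + i • v x := by
      rw [hveq]; abel
    exact WithTop.add_right_cancel hivx h2
  have hdiv : φ (p.coeff i / p.coeff j) * φ (p.coeff j) = φ (p.coeff i) := by
    rw [← map_mul, div_mul_cancel₀ _ hpj]
  have hvj : v (φ (p.coeff j)) ≠ ⊤ := v_ne_top hv (by simpa using hpj)
  have : v (φ (p.coeff i / p.coeff j)) + v (φ (p.coeff j))
      = (j - i) • v x + v (φ (p.coeff j)) := by
    rw [← hv.map_mul, hdiv, hkey]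
    abel
  exact WithTop.add_right_cancel hvj this


theorem nonneg_of_le_add_self {x c : WithTop Λ} (hc : c ≠ ⊤) (h : c ≤ x + c) : 0 ≤ x := by
  rcases eq_or_ne x ⊤ with rfl | hx
  · exact le_top
  · lift x to Λ using hx
    lift c to Λ using hc
    rw [← WithTop.coe_add, WithTop.coe_le_coe] at h
    exact_mod_cast le_add_iff_nonneg_left c |>.mp h

theorem exists_unit_rel (hv : IsValOnField v) (u : AlgebraicClosure K) (hu : v u = 0) :
    ∃ (D : ℕ) (w : ℕ → K), 1 ≤ D ∧ w D = 1 ∧ (∀ i, 0 ≤ v (algebraMap K (AlgebraicClosure K) (w i)))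
      ∧ v (algebraMap K (AlgebraicClosure K) (w 0)) = 0 ∧
      0 < v (∑ i ∈ Finset.range (D + 1), algebraMap K (AlgebraicClosure K) (w i) * u ^ i) := by
  classical
  set φ := algebraMap K (AlgebraicClosure K) with hφ
  have hu0 : u ≠ 0 := fun h0 => by rw [h0, v_zero hv] at hu; exact (by simp at hu)
  have hupow : ∀ i : ℕ, v (u ^ i) = 0 := fun i => by rw [v_pow hv, hu, smul_zero]
  set q := minpoly K u with hq
  have hint : IsIntegral K u := Algebra.IsIntegral.isIntegral (R := K) u
  have hq0 : q ≠ 0 := minpoly.ne_zero hint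
  have hsum : ∑ i ∈ Finset.range (q.natDegree + 1), φ (q.coeff i) * u ^ i = 0 := by
    have := minpoly.aeval K u
    rw [Polynomial.aeval_eq_sum_range] at this
    simpa [Algebra.smul_def] using this
  obtain ⟨j₀, hj₀, hj₀min⟩ := Finset.exists_min_image (Finset.range (q.natDegree + 1))
    (fun i => v (φ (q.coeff i))) ⟨q.natDegree, Finset.mem_range.mpr (Nat.lt_succ_self _)⟩
  have hqj₀ : q.coeff j₀ ≠ 0 := by
    intro h0
    have hlead : v (φ (q.coeff q.natDegree)) ≠ ⊤ :=
      v_ne_top hv (by simpa using Polynomial.leadingCoeff_ne_zero.mpr hq0)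
    have := hj₀min q.natDegree (Finset.mem_range.mpr (Nat.lt_succ_self _))
    rw [h0] at this
    simp only [map_zero, v_zero hv, top_le_iff] at this
    exact hlead this
  have hφqj₀ : v (φ (q.coeff j₀)) ≠ ⊤ := v_ne_top hv (by simpa using hqj₀)
  set r : ℕ → K := fun i => q.coeff i / q.coeff j₀ with hr
  have hrj₀ : r j₀ = 1 := div_self hqj₀
  have hr_eq : ∀ i, v (φ (r i)) + v (φ (q.coeff j₀)) = v (φ (q.coeff i)) := by
    intro i
    rw [← hv.map_mul, ← map_mul]
    congr 2
    rw [hr]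
    exact div_mul_cancel₀ _ hqj₀
  have hr0 : ∀ i, 0 ≤ v (φ (r i)) := by
    intro i
    by_cases hqi : q.coeff i = 0
    · simp [hr, hqi, v_zero hv]
    · have hile : i ∈ Finset.range (q.natDegree + 1) :=
        Finset.mem_range.mpr (Nat.lt_succ_of_le (Polynomial.le_natDegree_of_ne_zero hqi))
      have hle := hj₀min i hile
      rw [← hr_eq i] at hle
      exact nonneg_of_le_add_self hφqj₀ hle
  have hrsum : ∑ i ∈ Finset.range (q.natDegree + 1), φ (r i) * u ^ i = 0 := by
    have : ∀ i, φ (r i) * u ^ i = φ (q.coeff i) * u ^ i * (φ (q.coeff j₀))⁻¹ := by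
      intro i
      rw [hr, map_div₀]
      field_simp
    rw [Finset.sum_congr rfl fun i _ => this i, ← Finset.sum_mul, hsum, zero_mul]
  set Z := (Finset.range (q.natDegree + 1)).filter (fun i => v (φ (r i)) = 0) with hZ
  have hj₀Z : j₀ ∈ Z := by
    rw [hZ, Finset.mem_filter]
    exact ⟨hj₀, by rw [hrj₀, map_one, v_one hv]⟩
  have hZne : Z.Nonempty := ⟨j₀, hj₀Z⟩
  set d := Z.max' hZne with hd
  set d' := Z.min' hZne with hd'
  have hdZ : d ∈ Z := Finset.max'_mem _ _
  have hd'Z : d' ∈ Z := Finset.min'_mem _ _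
  have hd'd : d' ≤ d := Finset.min'_le _ _ hdZ
  have hdn : d ≤ q.natDegree := Nat.lt_succ_iff.mp (Finset.mem_range.mp (Finset.mem_filter.mp hdZ).1)
  have hvd : v (φ (r d)) = 0 := (Finset.mem_filter.mp hdZ).2
  have hvd' : v (φ (r d')) = 0 := (Finset.mem_filter.mp hd'Z).2
  have hrd : r d ≠ 0 := by
    intro h0
    rw [h0, map_zero, v_zero hv] at hvd
    simp at hvd
  have hout : ∀ i ∈ Finset.range (q.natDegree + 1), ¬(d' ≤ i ∧ i ≤ d) → 0 < v (φ (r i)) := by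
    intro i hi hnot
    have hiZ : i ∉ Z := by
      intro hiZ
      exact hnot ⟨Finset.min'_le _ _ hiZ, Finset.le_max' _ _ hiZ⟩
    have : v (φ (r i)) ≠ 0 := by
      intro h0
      exact hiZ (Finset.mem_filter.mpr ⟨hi, h0⟩)
    exact lt_of_le_of_ne (hr0 i) (Ne.symm this)
  set Tin := (Finset.range (q.natDegree + 1)).filter (fun i => d' ≤ i ∧ i ≤ d) with hTin
  have hsplit := Finset.sum_filter_add_sum_filter_not (Finset.range (q.natDegree + 1))
    (fun i => d' ≤ i ∧ i ≤ d) (fun i => φ (r i) * u ^ i)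
  rw [hrsum] at hsplit
  have hToutpos : 0 < v (∑ i ∈ (Finset.range (q.natDegree + 1)).filter
      (fun i => ¬(d' ≤ i ∧ i ≤ d)), φ (r i) * u ^ i) := by
    apply v_sum_gt hv _ _ (by simp)
    intro i hi
    rw [Finset.mem_filter] at hi
    rw [hv.map_mul, hupow, add_zero]
    exact hout i hi.1 hi.2
  have hTinpos : 0 < v (∑ i ∈ Tin, φ (r i) * u ^ i) := by
    have heq : ∑ i ∈ Tin, φ (r i) * u ^ i = -(∑ i ∈ (Finset.range (q.natDegree + 1)).filter
        (fun i => ¬(d' ≤ i ∧ i ≤ d)), φ (r i) * u ^ i) :=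
      eq_neg_of_add_eq_zero_left hsplit
    rw [heq, v_neg hv]
    exact hToutpos
  set D := d - d' with hD
  set w : ℕ → K := fun i => r (d' + i) / r d with hw
  have hweq : ∀ i, φ (w i) * φ (r d) = φ (r (d' + i)) := by
    intro i
    rw [← map_mul]
    congr 1
    rw [hw]
    exact div_mul_cancel₀ _ hrd
  have hvw : ∀ i, v (φ (w i)) = v (φ (r (d' + i))) := by
    intro i
    have := congrArg v (hweq i)
    rwa [hv.map_mul, hvd, add_zero] at this
  -- the reindexing identity
  have hDd : d' + D = d := by omega
  have hidentity : φ (r d) * u ^ d' * (∑ i ∈ Finset.range (D + 1), φ (w i) * u ^ i)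
      = ∑ j ∈ Tin, φ (r j) * u ^ j := by
    rw [Finset.mul_sum]
    refine Finset.sum_bij' (fun i (_ : i ∈ Finset.range (D + 1)) => d' + i)
      (fun j (_ : j ∈ Tin) => j - d') ?_ ?_ ?_ ?_ ?_
    · intro i hi
      rw [Finset.mem_range] at hi
      rw [hTin, Finset.mem_filter, Finset.mem_range]
      omega
    · intro j hj
      rw [hTin, Finset.mem_filter, Finset.mem_range] at hj
      rw [Finset.mem_range]
      omega
    · intro i hi
      omega
    · intro j hj
      rw [hTin, Finset.mem_filter] at hj
      omega
    · intro i hi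
      rw [← hweq i, pow_add]
      ring
  have hSpos : 0 < v (∑ i ∈ Finset.range (D + 1), φ (w i) * u ^ i) := by
    have hval := congrArg v hidentity
    rw [hv.map_mul, hv.map_mul, hvd, hupow, zero_add, zero_add] at hval
    rw [hval]
    exact hTinpos
  have hD1 : 1 ≤ D := by
    by_contra hD0
    push_neg at hD0
    have hD0' : D = 0 := by omega
    rw [hD0'] at hSpos
    have hsum1 : ∑ i ∈ Finset.range (0 + 1), φ (w i) * u ^ i = φ (w 0) := by simp
    rw [hsum1] at hSpos
    have hw0 : w 0 = 1 := by
      have hdd : d' + 0 = d := by omega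
      show r (d' + 0) / r d = 1
      rw [hdd]
      exact div_self hrd
    rw [hw0, map_one, v_one hv] at hSpos
    exact lt_irrefl _ hSpos
  refine ⟨D, w, hD1, ?_, fun i => (hvw i) ▸ hr0 _, ?_, hSpos⟩
  · show r (d' + D) / r d = 1
    rw [hDd]
    exact div_self hrd
  · rw [hvw 0]
    simpa using hvd'


theorem roots_val (hv : IsValOnField v) {m : Polynomial (AlgebraicClosure K)} (hm : m.Monic)
    {D : ℕ} (hD : m.natDegree = D) (hD1 : 1 ≤ D) {va : WithTop Λ} (hva : va ≠ ⊤)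
    (hcoef : ∀ i, i < D → (D - i) • va ≤ v (m.coeff i)) (hc0 : v (m.coeff 0) = D • va) :
    (∀ z ∈ m.roots, v z = va) ∧ m.roots.card = D ∧
      m = (m.roots.map fun z => X - C z).prod := by
  have hsplits : Splits m := IsAlgClosed.splits m
  have hcard : Multiset.card m.roots = D := by
    rw [← hD]
    exact splits_iff_card_roots.mp hsplits
  have hprod : m = (m.roots.map fun z => X - C z).prod :=
    hsplits.eq_prod_roots_of_monic hm
  -- (α) lower bound
  have hlow : ∀ z ∈ m.roots, va ≤ v z := by
    intro z hz
    by_contra hlt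
    push_neg at hlt
    have hvz_ne : v z ≠ ⊤ := by
      intro htop
      rw [htop] at hlt
      exact (not_top_lt hlt)
    have hroot : m.eval z = 0 := (Polynomial.isRoot_of_mem_roots hz)
    have heval : m.eval z = ∑ i ∈ Finset.range D, m.coeff i * z ^ i + m.coeff D * z ^ D := by
      rw [Polynomial.eval_eq_sum_range, hD, Finset.sum_range_succ]
    have hcD : m.coeff D = 1 := by
      rw [← hD]
      exact hm.coeff_natDegree
    have hrest : D • v z < v (∑ i ∈ Finset.range D, m.coeff i * z ^ i) := by
      apply v_sum_gt hv _ _ (nsmul_ne_top hvz_ne D)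
      intro i hi
      rw [Finset.mem_range] at hi
      rw [hv.map_mul, v_pow hv]
      have h1 : (D - i) • v z < v (m.coeff i) := by
        refine lt_of_lt_of_le ?_ (hcoef i hi)
        exact nsmul_lt_nsmul_wt hvz_ne hlt (by omega)
      have h2 : D • v z = (D - i) • v z + i • v z := by
        rw [← add_nsmul]
        congr 1
        omega
      rw [h2]
      exact add_lt_add_of_lt_of_le_wt (nsmul_ne_top hvz_ne _) (nsmul_ne_top hvz_ne _) h1 le_rfl
    have hvzD : v (m.coeff D * z ^ D) = D • v z := by
      rw [hcD, one_mul, v_pow hv]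
    have : v (m.eval z) = D • v z := by
      rw [heval, v_add_eq hv (by rw [hvzD]; exact hrest), hvzD]
    rw [hroot, v_zero hv] at this
    exact (nsmul_ne_top hvz_ne D) this.symm
  -- (β) sum of root values
  have hsum : (m.roots.map v).sum = D • va := by
    have hc0' : m.coeff 0 = m.eval 0 := Polynomial.coeff_zero_eq_eval_zero m
    have he : m.eval 0 = ((m.roots.map fun z => -z).prod) := by
      conv_lhs => rw [hprod]
      rw [Polynomial.eval_multiset_prod, Multiset.map_map]
      congr 1
      apply Multiset.map_congr rfl
      intro z _
      simp
    have hv1 : v (m.coeff 0) = (m.roots.map v).sum := by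
      rw [hc0', he, v_multiset_prod hv, Multiset.map_map]
      congr 1
      apply Multiset.map_congr rfl
      intro z _
      exact v_neg hv z
    rw [← hv1, hc0]
  -- (γ) each equals va
  refine ⟨?_, hcard, hprod⟩
  intro z hz
  refine le_antisymm ?_ (hlow z hz)
  by_contra hgt
  push_neg at hgt
  have hgt' : va < v z := hgt
  obtain ⟨R', hR'⟩ := Multiset.exists_cons_of_mem hz
  have hcard' : Multiset.card R' = D - 1 := by
    have := hcard
    rw [hR'] at this
    simp at this
    omega
  have hsum' : (m.roots.map v).sum = v z + (R'.map v).sum := by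
    rw [hR', Multiset.map_cons, Multiset.sum_cons]
  have hlow' : (D - 1) • va ≤ (R'.map v).sum := by
    have h1 : ∀ z' ∈ R', va ≤ v z' := by
      intro z' hz'
      apply hlow
      rw [hR']
      exact Multiset.mem_cons_of_mem hz'
    calc (D - 1) • va = ((R'.map fun _ => va).sum) := by
          rw [Multiset.map_const', Multiset.sum_replicate, hcard']
      _ ≤ (R'.map v).sum := Multiset.sum_map_le_sum_map _ _ h1
  have : D • va < (m.roots.map v).sum := by
    rw [hsum']
    calc D • va = va + (D - 1) • va := by
          rw [← succ_nsmul']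
          congr 1
          omega
      _ < v z + (R'.map v).sum :=
          add_lt_add_of_lt_of_le_wt hva (nsmul_ne_top hva _) hgt' hlow'
  rw [hsum] at this
  exact lt_irrefl _ this


-- new auxiliary lemmas

theorem map_hasseDeriv (φ : K →+* AlgebraicClosure K) (f : Polynomial K) (s : ℕ) :
    (hasseDeriv s f).map φ = hasseDeriv s (f.map φ) := by
  ext k
  rw [coeff_map, hasseDeriv_coeff, hasseDeriv_coeff, coeff_map, map_mul, map_natCast]

theorem taylor_sub_C (r z : AlgebraicClosure K) (P : Polynomial (AlgebraicClosure K)) :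
    taylor r (P - C z) = taylor r P - C z := by
  rw [map_sub, taylor_C]

theorem aux_monic (c : ℕ → K) (D : ℕ) (hD1 : 1 ≤ D) :
    (X ^ D + ∑ i ∈ Finset.range D, C (c i) * X ^ i).Monic ∧
    (X ^ D + ∑ i ∈ Finset.range D, C (c i) * X ^ i).natDegree = D ∧
    (∀ i, i < D → (X ^ D + ∑ j ∈ Finset.range D, C (c j) * X ^ j).coeff i = c i) := by
  have hdeglt : (∑ i ∈ Finset.range D, C (c i) * X ^ i).degree < (D : WithBot ℕ) := by
    refine lt_of_le_of_lt (degree_sum_le _ _) ?_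
    rw [Finset.sup_lt_iff (by exact_mod_cast WithBot.bot_lt_coe D)]
    intro i hi
    refine lt_of_le_of_lt (degree_C_mul_X_pow_le i (c i)) ?_
    exact_mod_cast Finset.mem_range.mp hi
  refine ⟨monic_X_pow_add ?_, ?_, ?_⟩
  · exact hdeglt
  · have hdeg : (X ^ D + ∑ i ∈ Finset.range D, C (c i) * X ^ i).degree = (D : WithBot ℕ) := by
      rw [degree_add_eq_left_of_degree_lt (by rw [degree_X_pow]; exact hdeglt), degree_X_pow]
    exact natDegree_eq_of_degree_eq_some hdeg
  · intro i hi
    rw [coeff_add, coeff_X_pow, if_neg (by omega), zero_add, finset_sum_coeff]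
    have hterm : ∀ j ∈ Finset.range D, (C (c j) * X ^ j).coeff i
        = if j = i then c i else 0 := by
      intro j _
      rw [coeff_C_mul, coeff_X_pow]
      by_cases hij : i = j
      · subst hij; simp
      · rw [if_neg hij, if_neg (fun h => hij h.symm), mul_zero]
    rw [Finset.sum_congr rfl hterm, Finset.sum_ite_eq' (Finset.range D) i fun _ => c i,
      if_pos (Finset.mem_range.mpr hi)]


end LtRadiusProof
end LtRadiusProofSection

open LtRadiusProof

set_option maxHeartbeats 1000000 in
/-- if `res_K(v_{a,δ}) < res_K(v_{b,ε})`, then `δ < ε`. -/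
theorem ltRadius
    (v : AlgebraicClosure K → WithTop Λ) (hv : IsValOnField v)
    (hdiv : IsDivisible Λ)
    (a b : AlgebraicClosure K) (δ ε : Λ)
    (h : valLT (resK (monoVal v a δ)) (resK (monoVal v b ε))) :
    δ < ε := by
  classical
  set φ := algebraMap K (AlgebraicClosure K) with hφdef
  have hex : ∃ n : ℕ, ∃ f : Polynomial K, f.natDegree = n ∧
      resK (monoVal v a δ) f ≠ resK (monoVal v b ε) f := by
    obtain ⟨f, hf⟩ := Function.ne_iff.mp h.2
    exact ⟨f.natDegree, f, rfl, hf⟩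
  obtain ⟨f₀, hf₀deg, hf₀ne⟩ := Nat.find_spec hex
  have hmin : ∀ g : Polynomial K, g.natDegree < f₀.natDegree →
      resK (monoVal v a δ) g = resK (monoVal v b ε) g := by
    intro g hg
    by_contra hne
    exact Nat.find_min hex (hf₀deg ▸ hg) ⟨g, rfl, hne⟩
  have hlt₀ : resK (monoVal v a δ) f₀ < resK (monoVal v b ε) f₀ :=
    lt_of_le_of_ne (h.1 f₀) hf₀ne
  have hf₀0 : f₀ ≠ 0 := by
    rintro rfl
    apply hf₀ne
    show monoVal v a δ ((0 : Polynomial K).map (algebraMap K (AlgebraicClosure K)))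
        = monoVal v b ε ((0 : Polynomial K).map (algebraMap K (AlgebraicClosure K)))
    rw [Polynomial.map_zero, show (0 : Polynomial (AlgebraicClosure K)) = C 0 by simp,
      monoVal_C hv, monoVal_C hv]
  have hlt₀' : monoVal v a δ (f₀.map φ) < monoVal v b ε (f₀.map φ) := hlt₀
  set F := f₀.map φ with hF
  have hF0 : F ≠ 0 := Polynomial.map_ne_zero hf₀0
  set n := f₀.natDegree with hn
  have hFdeg : F.natDegree = n := natDegree_map φ
  have hn1 : 1 ≤ n := by
    by_contra h0
    push_neg at h0
    have hn0 : f₀.natDegree = 0 := by omega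
    have hC : f₀ = C (f₀.coeff 0) := Polynomial.eq_C_of_natDegree_eq_zero hn0
    apply hf₀ne
    show monoVal v a δ (f₀.map φ) = monoVal v b ε (f₀.map φ)
    rw [hC, Polynomial.map_C, monoVal_C hv, monoVal_C hv]
  by_cases hcase : ∀ k, 1 ≤ k → wc v a δ F 0 < wc v a δ F k
  · -- case (ii) : "unit" case, derive a contradiction with h.1
    exfalso
    have hwc0 : wc v a δ F 0 = v ((taylor a F).coeff 0) := wc_zero F
    set A := v ((taylor a F).coeff 0) with hA
    have hAne : A ≠ ⊤ := by
      have h1 := hcase 1 le_rfl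
      rw [hwc0] at h1
      exact ne_top_of_lt h1
    have hx0 : (taylor a F).coeff 0 ≠ 0 := fun h0 => hAne (by rw [hA, h0, v_zero hv])
    set x := F.eval a with hx
    have hxc : (taylor a F).coeff 0 = x := taylor_coeff_zero a F
    have hμA : monoVal v a δ F = A := by
      refine le_antisymm ((monoVal_le_wc hv F 0).trans (le_of_eq hwc0)) (le_monoVal ?_)
      intro k
      rcases Nat.eq_zero_or_pos k with rfl | hk1
      · exact le_of_eq hwc0.symm
      · exact le_of_lt (hwc0 ▸ hcase k hk1)
    have hηgt : A < monoVal v b ε F := hμA ▸ hlt₀'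
    obtain ⟨N, π, hN1, hπ0, hπv⟩ := exists_N_pi hv x (hxc ▸ hx0)
    have hvx : v x = A := by rw [hA, hxc]
    rw [hvx] at hπv
    have hφπ0 : φ π ≠ 0 := by simpa using hπ0
    set va := v (φ π) with hva
    have hvaNA : va = N • A := hπv
    have hva_ne : va ≠ ⊤ := v_ne_top hv hφπ0
    set u := x ^ N * (φ π)⁻¹ with hu
    have hu0 : v u = 0 := by
      have hmul : u * φ π = x ^ N := by
        rw [hu]
        field_simp
      have hval := congrArg v hmul
      rw [hv.map_mul, v_pow hv, hvx, ← hvaNA, ← hva] at hval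
      have hval' : v u + va = 0 + va := by rw [zero_add]; exact hval
      exact WithTop.add_right_cancel hva_ne hval'
    obtain ⟨D, w, hD1, hwD, hw_nonneg, hw0, hSpos⟩ := exists_unit_rel hv u hu0
    obtain ⟨hmcMonic, hmcDeg, hmcCoeff⟩ :=
      aux_monic (fun i => w i * π ^ (D - i)) D hD1
    set mc := X ^ D + ∑ i ∈ Finset.range D, C (w i * π ^ (D - i)) * X ^ i with hmc
    set mhat := mc.map φ with hmhat
    have hmhatMonic : mhat.Monic := hmcMonic.map φ
    have hmhatDeg : mhat.natDegree = D := by rw [hmhat, natDegree_map φ, hmcDeg]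
    have hcoeffs : ∀ i, i ≤ D → mhat.coeff i = φ (w i) * (φ π) ^ (D - i) := by
      intro i hi
      rcases lt_or_eq_of_le hi with hlt | heq
      · rw [hmhat, coeff_map, hmcCoeff i hlt, map_mul, map_pow]
      · subst heq
        have h1 : mhat.coeff i = 1 := by
          have := hmhatMonic.coeff_natDegree
          rwa [hmhatDeg] at this
        rw [h1, hwD, map_one, Nat.sub_self, pow_zero, mul_one]
    have hcv : ∀ i, i ≤ D → v (mhat.coeff i) = v (φ (w i)) + (D - i) • va := by
      intro i hi
      rw [hcoeffs i hi, hv.map_mul, v_pow hv, hva]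
    have hcoef_ge : ∀ i, i < D → (D - i) • va ≤ v (mhat.coeff i) := by
      intro i hi
      rw [hcv i hi.le]
      exact le_add_of_nonneg_left (hw_nonneg i)
    have hc0v : v (mhat.coeff 0) = D • va := by
      rw [hcv 0 (by omega), hw0, zero_add, Nat.sub_zero]
    obtain ⟨hroots, hcard, hprod⟩ := roots_val hv hmhatMonic hmhatDeg hD1 hva_ne hcoef_ge hc0v
    -- the evaluation identity
    have hueq : ∀ i, i ≤ D → mhat.coeff i * (x ^ N) ^ i = φ π ^ D * (φ (w i) * u ^ i) := by
      intro i hi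
      rw [hcoeffs i hi, hu, mul_pow, inv_pow]
      have hpow : (φ π) ^ (D - i) * (φ π) ^ i = (φ π) ^ D := by
        rw [← pow_add]
        congr 1
        omega
      calc φ (w i) * φ π ^ (D - i) * (x ^ N) ^ i
          = φ (w i) * ((x ^ N) ^ i * (φ π) ^ (D - i)) := by ring
        _ = φ (w i) * ((x ^ N) ^ i * ((φ π) ^ D * ((φ π) ^ i)⁻¹)) := by
            rw [← hpow, mul_inv_cancel_right₀ (pow_ne_zero i hφπ0)]
        _ = φ π ^ D * (φ (w i) * ((x ^ N) ^ i * ((φ π) ^ i)⁻¹)) := by ring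
    have hevalpos : D • va < v (mhat.eval (x ^ N)) := by
      have heval : mhat.eval (x ^ N)
          = φ π ^ D * (∑ i ∈ Finset.range (D + 1), φ (w i) * u ^ i) := by
        rw [Polynomial.eval_eq_sum_range, hmhatDeg, Finset.mul_sum]
        apply Finset.sum_congr rfl
        intro i hi
        exact hueq i (Nat.lt_succ_iff.mp (Finset.mem_range.mp hi))
      rw [heval, hv.map_mul, v_pow hv, ← hva]
      have h2 := (WithTop.add_lt_add_iff_left (nsmul_ne_top hva_ne D)).mpr hSpos
      rw [add_zero] at h2
      exact h2
    set G := mc.comp (f₀ ^ N) with hG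
    have hGmap : G.map φ = mhat.comp (F ^ N) := by
      rw [hG, Polynomial.map_comp, Polynomial.map_pow, hmhat, hF]
    have hfactor : mhat.comp (F ^ N) = ((mhat.roots.map fun z => F ^ N - C z)).prod := by
      conv_lhs => rw [hprod]
      have hcomp : ((mhat.roots.map fun z => X - C z)).prod.comp (F ^ N)
          = ((mhat.roots.map fun z => X - C z).map (fun p => p.comp (F ^ N))).prod := by
        have := map_multiset_prod (Polynomial.eval₂RingHom Polynomial.C (F ^ N))
          (mhat.roots.map fun z => X - C z)
        simpa [Polynomial.comp] using this
      rw [hcomp, Multiset.map_map]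
      congr 1
      apply Multiset.map_congr rfl
      intro z _
      simp [Polynomial.sub_comp]
    have hwck : ∀ k, 1 ≤ k → A < wc v a δ F k := by
      intro k hk
      exact hwc0 ▸ hcase k hk
    obtain ⟨hpow0, hpowk⟩ := unit_pow hv hAne hA.symm hwck N
    have hconstpow : (taylor a (F ^ N)).coeff 0 = x ^ N := by
      rw [taylor_coeff_zero, Polynomial.eval_pow, hx]
    have hfaccoeff : ∀ (z : AlgebraicClosure K) (k : ℕ),
        (taylor a (F ^ N - C z)).coeff k
          = (taylor a (F ^ N)).coeff k - (if k = 0 then z else 0) := by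
      intro z k
      rw [taylor_sub_C, coeff_sub, coeff_C]
    have hfac_const : ∀ z, (taylor a (F ^ N - C z)).coeff 0 = x ^ N - z := by
      intro z
      rw [hfaccoeff, if_pos rfl, hconstpow]
    have hfac_wc : ∀ (z : AlgebraicClosure K) (k : ℕ), 1 ≤ k →
        wc v a δ (F ^ N - C z) k = wc v a δ (F ^ N) k := by
      intro z k hk
      rw [wc, wc, hfaccoeff, if_neg (by omega), sub_zero]
    have hfac_ge : ∀ z ∈ mhat.roots, va ≤ monoVal v a δ (F ^ N - C z) := by
      intro z hz
      refine le_monoVal ?_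
      intro k
      rcases Nat.eq_zero_or_pos k with rfl | hk1
      · rw [wc_zero, hfac_const]
        have h1 : va ≤ v (x ^ N) := by rw [v_pow hv, hvx, hvaNA]
        have h2 : va ≤ v (-z) := by rw [v_neg hv, hroots z hz]
        rw [sub_eq_add_neg]
        exact le_trans (le_min h1 h2) (hv.min_le_add _ _)
      · rw [hfac_wc z k hk1]
        rw [hvaNA]
        exact (hpowk k hk1).le
    have hb_fac : ∀ z ∈ mhat.roots, v ((F ^ N - C z).eval b) = va := by
      intro z hz
      have hev : (F ^ N - C z).eval b = (F.eval b) ^ N - z := by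
        simp
      rw [hev]
      have hvb : A < v (F.eval b) := lt_of_lt_of_le hηgt (monoVal_le_eval hv F)
      have hpowgt : va < v ((F.eval b) ^ N) := by
        rw [v_pow hv, hvaNA]
        exact nsmul_lt_nsmul_wt hAne hvb (by omega)
      rw [sub_eq_add_neg, v_add_eq hv (by rw [v_neg hv, hroots z hz]; exact hpowgt), v_neg hv]
      exact hroots z hz
    have hηG : monoVal v b ε (G.map φ) ≤ D • va := by
      refine le_trans (monoVal_le_eval hv _) ?_
      rw [hGmap, hfactor, Polynomial.eval_multiset_prod, Multiset.map_map,
        v_multiset_prod hv, Multiset.map_map]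
      have heq : ((mhat.roots.map (v ∘ (Polynomial.eval b ∘ fun z => F ^ N - C z)))).sum
          = D • va := by
        have hcongr : mhat.roots.map (v ∘ (Polynomial.eval b ∘ fun z => F ^ N - C z))
            = mhat.roots.map (fun _ => va) := by
          apply Multiset.map_congr rfl
          intro z hz
          exact hb_fac z hz
        rw [hcongr, Multiset.map_const', Multiset.sum_replicate, hcard]
      exact le_of_eq heq
    have hprodconst : (mhat.roots.map fun z => x ^ N - z).prod = mhat.eval (x ^ N) := by
      conv_rhs => rw [hprod]
      rw [Polynomial.eval_multiset_prod, Multiset.map_map]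
      congr 1
      apply Multiset.map_congr rfl
      intro z _
      simp
    have hsum_gt : D • va < ((mhat.roots.map fun z => x ^ N - z).map v).sum := by
      rw [← v_multiset_prod hv, hprodconst]
      exact hevalpos
    have hexz : ∃ z ∈ mhat.roots, va < v (x ^ N - z) := by
      by_contra hall
      push_neg at hall
      have hle : ((mhat.roots.map fun z => x ^ N - z).map v).sum ≤ D • va := by
        rw [Multiset.map_map]
        calc (mhat.roots.map (v ∘ fun z => x ^ N - z)).sum
            ≤ (mhat.roots.map fun _ => va).sum :=
              Multiset.sum_map_le_sum_map _ _ (fun z hz => hall z hz)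
          _ = D • va := by rw [Multiset.map_const', Multiset.sum_replicate, hcard]
      exact absurd hsum_gt (not_lt.mpr hle)
    obtain ⟨zst, hzst, hzstv⟩ := hexz
    have hfac_gt : va < monoVal v a δ (F ^ N - C zst) := by
      obtain ⟨k, hk, hkeq⟩ := monoVal_exists (v := v) (a := a) (δ := δ) (F ^ N - C zst)
      rw [hkeq]
      rcases Nat.eq_zero_or_pos k with rfl | hk1
      · rw [wc_zero, hfac_const]
        exact hzstv
      · rw [hfac_wc zst k hk1, hvaNA]
        exact hpowk k hk1
    have hμG : D • va < monoVal v a δ (G.map φ) := by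
      have hge := monoVal_multiset_prod_ge hv (a := a) (δ := δ)
        (mhat.roots.map fun z => F ^ N - C z)
      rw [← hfactor, ← hGmap, Multiset.map_map] at hge
      obtain ⟨R', hR'⟩ := Multiset.exists_cons_of_mem hzst
      have hcardR' : Multiset.card R' = D - 1 := by
        have := hcard
        rw [hR'] at this
        simp at this
        omega
      have hsumsplit : (mhat.roots.map (monoVal v a δ ∘ fun z => F ^ N - C z)).sum
          = monoVal v a δ (F ^ N - C zst)
            + (R'.map (monoVal v a δ ∘ fun z => F ^ N - C z)).sum := by
        rw [hR', Multiset.map_cons, Multiset.sum_cons]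
        rfl
      have hR'ge : (D - 1) • va ≤ (R'.map (monoVal v a δ ∘ fun z => F ^ N - C z)).sum := by
        calc (D - 1) • va = (R'.map fun _ => va).sum := by
              rw [Multiset.map_const', Multiset.sum_replicate, hcardR']
          _ ≤ _ := Multiset.sum_map_le_sum_map _ _ (fun z hz => hfac_ge z
              (by rw [hR']; exact Multiset.mem_cons_of_mem hz))
      calc D • va = va + (D - 1) • va := by
            rw [← succ_nsmul']
            congr 1
            omega
        _ < monoVal v a δ (F ^ N - C zst)
            + (R'.map (monoVal v a δ ∘ fun z => F ^ N - C z)).sum :=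
              add_lt_add_of_lt_of_le_wt hva_ne (nsmul_ne_top hva_ne _) hfac_gt hR'ge
        _ = (mhat.roots.map (monoVal v a δ ∘ fun z => F ^ N - C z)).sum := hsumsplit.symm
        _ ≤ monoVal v a δ (G.map φ) := hge
    have hcontr : monoVal v a δ (G.map φ) ≤ monoVal v b ε (G.map φ) := h.1 G
    exact lt_irrefl _ (lt_of_le_of_lt (hcontr.trans hηG) hμG)
  · -- case (i)
    push_neg at hcase
    obtain ⟨k₁, hk₁1, hk₁le⟩ := hcase
    obtain ⟨s, hsmem, hsmin⟩ := Finset.exists_min_image (Finset.Icc 1 n) (wc v a δ F)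
      ⟨1, Finset.mem_Icc.mpr ⟨le_rfl, hn1⟩⟩
    obtain ⟨hs1, hsn⟩ := Finset.mem_Icc.mp hsmem
    have hwcs_le0 : wc v a δ F s ≤ wc v a δ F 0 := by
      rcases le_or_gt k₁ n with hk | hk
      · exact le_trans (hsmin k₁ (Finset.mem_Icc.mpr ⟨hk₁1, hk⟩)) hk₁le
      · have htop : wc v a δ F k₁ = ⊤ := wc_top hv (by rw [hFdeg]; exact hk)
        rw [htop, top_le_iff] at hk₁le
        rw [hk₁le]
        exact le_top
    have hμval : monoVal v a δ F = wc v a δ F s := by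
      refine le_antisymm (monoVal_le_wc hv F s) (le_monoVal ?_)
      intro k
      rcases Nat.eq_zero_or_pos k with rfl | hk1
      · exact hwcs_le0
      rcases le_or_gt k n with hk | hk
      · exact hsmin k (Finset.mem_Icc.mpr ⟨hk1, hk⟩)
      · have htop : wc v a δ F k = ⊤ := wc_top hv (by rw [hFdeg]; exact hk)
        rw [htop]
        exact le_top
    have hfin : wc v a δ F s ≠ ⊤ := by
      intro htop
      have h1 : (⊤ : WithTop Λ) < monoVal v b ε F := by
        rw [← htop, ← hμval]
        exact hlt₀'
      exact not_top_lt h1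
    have hvcs : v ((taylor a F).coeff s) ≠ ⊤ := by
      intro htop
      exact hfin (by rw [wc, htop, top_add])
    have hfact := fact1 (a := b) (δ := ε) hv F s
    have hdlt : (hasseDeriv s f₀).natDegree < n :=
      lt_of_le_of_lt (natDegree_hasseDeriv_le f₀ s) (by omega)
    have heqd := hmin _ hdlt
    have heqd2 : monoVal v a δ ((hasseDeriv s f₀).map φ)
        = monoVal v b ε ((hasseDeriv s f₀).map φ) := heqd
    have hmapd : (hasseDeriv s f₀).map φ = hasseDeriv s F := map_hasseDeriv φ f₀ s
    rw [hmapd] at heqd2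
    have hdle : monoVal v a δ (hasseDeriv s F) ≤ v ((taylor a F).coeff s) := by
      rw [taylor_coeff]
      exact monoVal_le_eval hv _
    have hchain : v ((taylor a F).coeff s) + ((s • δ : Λ) : WithTop Λ)
        < v ((taylor a F).coeff s) + ((s • ε : Λ) : WithTop Λ) := by
      calc v ((taylor a F).coeff s) + ((s • δ : Λ) : WithTop Λ)
          = monoVal v a δ F := hμval.symm
        _ < monoVal v b ε F := hlt₀'
        _ ≤ ((s • ε : Λ) : WithTop Λ) + monoVal v b ε (hasseDeriv s F) := hfact
        _ = ((s • ε : Λ) : WithTop Λ) + monoVal v a δ (hasseDeriv s F) := by rw [heqd2]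
        _ ≤ ((s • ε : Λ) : WithTop Λ) + v ((taylor a F).coeff s) := add_le_add_right hdle _
        _ = v ((taylor a F).coeff s) + ((s • ε : Λ) : WithTop Λ) := add_comm _ _
    have hsδε : (s • δ : Λ) < s • ε := by
      have h2 := (WithTop.add_lt_add_iff_left hvcs).mp hchain
      exact_mod_cast h2
    by_contra hcon
    push_neg at hcon
    exact absurd hsδε (not_lt.mpr (nsmul_le_nsmul_right hcon s))
end
end

section
/- Let μ = res_K(v_{b,δ}) for some (b,δ) ∈ K̄×Λ. Then for every nonconstant f ∈ K[x], the following are equivalent: (i) ε_μ(f) = δ; (ii) there exists a root a ∈ K̄ of f such that res_K(v_{a,δ}) = μ. -/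
open Polynomial

noncomputable section

variable {K Λ : Type*} [Field K] [AddCommGroup Λ] [LinearOrder Λ] [IsOrderedAddMonoid Λ]

namespace CentersAux

variable {v : AlgebraicClosure K → WithTop Λ}

local notation "Kb" => AlgebraicClosure K

lemma v_zero (hv : IsValOnField v) : v 0 = ⊤ := (hv.eq_top_iff 0).2 rfl

lemma v_one (hv : IsValOnField v) : v 1 = 0 := by
  have h := hv.map_mul 1 1
  rw [mul_one] at h
  have h1 : v (1 : Kb) ≠ ⊤ := fun ht => one_ne_zero ((hv.eq_top_iff 1).1 ht)
  obtain ⟨g, hg⟩ := WithTop.ne_top_iff_exists.mp h1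
  rw [← hg, ← WithTop.coe_add, WithTop.coe_eq_coe] at h
  have hg0 : g = 0 := left_eq_add.mp h
  rw [← hg, hg0, WithTop.coe_zero]

lemma v_neg_one (hv : IsValOnField v) : v (-1 : Kb) = 0 := by
  have h := hv.map_mul (-1) (-1)
  rw [neg_mul_neg, one_mul, v_one hv] at h
  have h1 : v (-1 : Kb) ≠ ⊤ := fun ht => by
    have := (hv.eq_top_iff (-1)).1 ht
    exact one_ne_zero (neg_eq_zero.mp this)
  obtain ⟨g, hg⟩ := WithTop.ne_top_iff_exists.mp h1
  rw [← hg, ← WithTop.coe_add, eq_comm, WithTop.coe_eq_zero] at h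
  have hg0 : g = 0 := by
    rcases lt_trichotomy g 0 with h' | h' | h'
    · have := add_lt_add h' h'
      rw [add_zero] at this
      exact absurd h this.ne
    · exact h'
    · have := add_lt_add h' h'
      rw [add_zero] at this
      exact absurd h this.ne'
  rw [← hg, hg0, WithTop.coe_zero]

lemma v_neg (hv : IsValOnField v) (x : Kb) : v (-x) = v x := by
  rw [← neg_one_mul, hv.map_mul, v_neg_one hv, zero_add]

lemma v_sub_comm (hv : IsValOnField v) (x y : Kb) : v (x - y) = v (y - x) := by
  rw [← neg_sub y x, v_neg hv]

lemma v_natCast (hv : IsValOnField v) (n : ℕ) : 0 ≤ v (n : Kb) := by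
  induction n with
  | zero => simp [v_zero hv]
  | succ n ih =>
      have : ((n + 1 : ℕ) : Kb) = (n : Kb) + 1 := by push_cast; ring
      rw [this]
      refine le_trans (le_min ih (le_of_eq (v_one hv).symm)) (hv.min_le_add _ _)

lemma min_add_right (x y d : WithTop Λ) : min x y + d = min (x + d) (y + d) := by
  rcases le_total x y with h | h
  · rw [min_eq_left h, min_eq_left (add_le_add_left h d)]
  · rw [min_eq_right h, min_eq_right (add_le_add_left h d)]

lemma le_v_sum_add (hv : IsValOnField v) (d : WithTop Λ) {γ : WithTop Λ} :
    ∀ (M : Multiset Kb), (∀ x ∈ M, γ ≤ v x + d) → γ ≤ v M.sum + d := by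
  intro M
  induction M using Multiset.induction_on with
  | empty => intro _; rw [Multiset.sum_zero, v_zero hv, top_add]; exact le_top
  | cons a M ih =>
      intro h
      rw [Multiset.sum_cons]
      have h1 := h a (Multiset.mem_cons_self a M)
      have h2 := ih fun x hx => h x (Multiset.mem_cons_of_mem hx)
      calc γ ≤ min (v a + d) (v M.sum + d) := le_min h1 h2
        _ = min (v a) (v M.sum) + d := (min_add_right _ _ _).symm
        _ ≤ v (a + M.sum) + d := add_le_add_left (hv.min_le_add _ _) d

lemma lt_v_sum_add (hv : IsValOnField v) (d : WithTop Λ) {γ : WithTop Λ} (hγ : γ ≠ ⊤) :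
    ∀ (M : Multiset Kb), (∀ x ∈ M, γ < v x + d) → γ < v M.sum + d := by
  intro M
  induction M using Multiset.induction_on with
  | empty =>
      intro _; rw [Multiset.sum_zero, v_zero hv, top_add]
      exact lt_top_iff_ne_top.mpr hγ
  | cons a M ih =>
      intro h
      rw [Multiset.sum_cons]
      have h1 := h a (Multiset.mem_cons_self a M)
      have h2 := ih fun x hx => h x (Multiset.mem_cons_of_mem hx)
      calc γ < min (v a + d) (v M.sum + d) := lt_min h1 h2
        _ = min (v a) (v M.sum) + d := (min_add_right _ _ _).symm
        _ ≤ v (a + M.sum) + d := add_le_add_left (hv.min_le_add _ _) d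

lemma le_v_finsetSum_add (hv : IsValOnField v) {ι : Type*} (d : WithTop Λ) {γ : WithTop Λ}
    (t : Finset ι) (g : ι → Kb) (h : ∀ i ∈ t, γ ≤ v (g i) + d) :
    γ ≤ v (∑ i ∈ t, g i) + d := by
  classical
  induction t using Finset.cons_induction with
  | empty => rw [Finset.sum_empty, v_zero hv, top_add]; exact le_top
  | cons a t ha ih =>
      rw [Finset.sum_cons]
      have h1 := h a (Finset.mem_cons_self a t)
      have h2 := ih fun x hx => h x (Finset.mem_cons_of_mem hx)
      calc γ ≤ min (v (g a) + d) (v (∑ i ∈ t, g i) + d) := le_min h1 h2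
        _ = min (v (g a)) (v (∑ i ∈ t, g i)) + d := (min_add_right _ _ _).symm
        _ ≤ v (g a + ∑ i ∈ t, g i) + d := add_le_add_left (hv.min_le_add _ _) d

lemma v_multiset_prod (hv : IsValOnField v) (M : Multiset Kb) :
    v M.prod = (M.map v).sum := by
  induction M using Multiset.induction_on with
  | empty => simp [v_one hv]
  | cons a M ih => simp [hv.map_mul, ih]

lemma sum_ne_top (M : Multiset (WithTop Λ)) (h : ∀ x ∈ M, x ≠ ⊤) : M.sum ≠ ⊤ := by
  induction M using Multiset.induction_on with
  | empty => simp
  | cons a M ih =>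
      rw [Multiset.sum_cons]
      exact WithTop.add_ne_top.mpr
        ⟨h a (Multiset.mem_cons_self a M), ih fun x hx => h x (Multiset.mem_cons_of_mem hx)⟩

lemma add_lt_add_coe {a b : WithTop Λ} {p q : Λ} (ha : a < ↑p) (hb : b < ↑q) :
    a + b < ↑(p + q) := by
  lift a to Λ using ne_top_of_lt ha with a' ha'
  lift b to Λ using ne_top_of_lt hb with b' hb'
  rw [← WithTop.coe_add, WithTop.coe_lt_coe]
  exact add_lt_add (WithTop.coe_lt_coe.mp ha) (WithTop.coe_lt_coe.mp hb)

lemma sum_lt_nsmul (hv : IsValOnField v) {δ : Λ} :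
    ∀ (M : Multiset Kb), M ≠ 0 → (∀ x ∈ M, v x < ↑δ) →
      (M.map v).sum < ((Multiset.card M • δ : Λ) : WithTop Λ) := by
  intro M
  induction M using Multiset.induction_on with
  | empty => intro h; exact absurd rfl h
  | cons a M ih =>
      intro _ h
      by_cases hM : M = 0
      · subst hM
        simpa using h a (Multiset.mem_cons_self a 0)
      · have h1 : v a < ↑δ := h a (Multiset.mem_cons_self a M)
        have h2 := ih hM fun x hx => h x (Multiset.mem_cons_of_mem hx)
        rw [Multiset.map_cons, Multiset.sum_cons, Multiset.card_cons]
        have : (Multiset.card M + 1) • δ = δ + Multiset.card M • δ := by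
          rw [add_nsmul, one_nsmul, add_comm]
        rw [this]
        exact add_lt_add_coe h1 h2

lemma v_pow_ge (hv : IsValOnField v) {x : Kb} {δ : Λ} (hx : (↑δ : WithTop Λ) ≤ v x) (k : ℕ) :
    ((k • δ : Λ) : WithTop Λ) ≤ v (x ^ k) := by
  induction k with
  | zero => simp [v_one hv]
  | succ k ih =>
      rw [pow_succ, hv.map_mul, succ_nsmul, WithTop.coe_add]
      exact add_le_add ih hx

end CentersAux

namespace CentersAux

variable {v : AlgebraicClosure K → WithTop Λ}

local notation "Kb" => AlgebraicClosure K
local notation "φ" => algebraMap K (AlgebraicClosure K)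

lemma hasse_map (s : ℕ) (f : Polynomial K) :
    (hasseDeriv s f).map φ = hasseDeriv s (f.map φ) := by
  ext n
  simp [hasseDeriv_coeff, coeff_map, map_mul, map_natCast]

lemma monoVal_le (hv : IsValOnField v) (a : Kb) (δ : Λ) (F : Polynomial Kb) (k : ℕ) :
    monoVal v a δ F ≤ v ((taylor a F).coeff k) + ((k • δ : Λ) : WithTop Λ) := by
  by_cases hk : k < F.natDegree + 1
  · exact Finset.inf_le (Finset.mem_range.mpr hk)
  · have hz : (taylor a F).coeff k = 0 :=
      coeff_eq_zero_of_natDegree_lt (by rw [natDegree_taylor]; omega)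
    rw [hz, v_zero hv, top_add]
    exact le_top

lemma le_monoVal {a : Kb} {δ : Λ} {F : Polynomial Kb} {γ : WithTop Λ}
    (h : ∀ k, k < F.natDegree + 1 → γ ≤ v ((taylor a F).coeff k) + ((k • δ : Λ) : WithTop Λ)) :
    γ ≤ monoVal v a δ F :=
  Finset.le_inf fun k hk => h k (Finset.mem_range.mp hk)

lemma monoVal_exists (a : Kb) (δ : Λ) (F : Polynomial Kb) :
    ∃ k, k ≤ F.natDegree ∧
      monoVal v a δ F = v ((taylor a F).coeff k) + ((k • δ : Λ) : WithTop Λ) := by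
  obtain ⟨k, hk, he⟩ := Finset.exists_mem_eq_inf (Finset.range (F.natDegree + 1))
    ⟨0, Finset.mem_range.mpr (Nat.succ_pos _)⟩
    (fun k => v ((taylor a F).coeff k) + ((k • δ : Λ) : WithTop Λ))
  exact ⟨k, Nat.lt_succ_iff.mp (Finset.mem_range.mp hk), he⟩

lemma monoVal_zero (hv : IsValOnField v) (a : Kb) (δ : Λ) :
    monoVal v a δ (0 : Polynomial Kb) = ⊤ := by
  simp [monoVal, v_zero hv]

lemma monoVal_ne_top (hv : IsValOnField v) {a : Kb} {δ : Λ} {F : Polynomial Kb} (hF : F ≠ 0) :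
    monoVal v a δ F ≠ ⊤ := by
  have ht0 : taylor a F ≠ 0 := by
    intro h0
    exact hF (taylor_injective a (by simpa using h0))
  have hc : (taylor a F).coeff F.natDegree ≠ 0 := by
    have := leadingCoeff_ne_zero.mpr ht0
    rwa [leadingCoeff, natDegree_taylor] at this
  have hterm : v ((taylor a F).coeff F.natDegree) + ((F.natDegree • δ : Λ) : WithTop Λ) ≠ ⊤ :=
    WithTop.add_ne_top.mpr ⟨fun ht => hc ((hv.eq_top_iff _).1 ht), WithTop.coe_ne_top⟩
  exact ne_top_of_le_ne_top hterm (monoVal_le hv a δ F F.natDegree)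

lemma taylor_hasse_coeff (b : Kb) (s j : ℕ) (F : Polynomial Kb) :
    (taylor b (hasseDeriv s F)).coeff j
      = ((j + s).choose j : Kb) * (taylor b F).coeff (j + s) := by
  rw [taylor_coeff, taylor_coeff]
  have h := LinearMap.congr_fun (hasseDeriv_comp (R := Kb) j s) F
  rw [LinearMap.comp_apply, LinearMap.smul_apply] at h
  rw [h, nsmul_eq_mul]
  push_cast
  rw [eval_mul, eval_natCast]

lemma shift_eq (x : WithTop Λ) (j s : ℕ) (δ : Λ) :
    x + (((j + s) • δ : Λ) : WithTop Λ)
      = ((s • δ : Λ) : WithTop Λ) + (x + ((j • δ : Λ) : WithTop Λ)) := by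
  rw [add_nsmul, WithTop.coe_add, ← add_assoc, add_comm]

lemma v_natMul_ge (hv : IsValOnField v) (N : ℕ) (c : Kb) : v c ≤ v ((N : Kb) * c) := by
  calc v c = 0 + v c := (zero_add _).symm
    _ ≤ v (N : Kb) + v c := add_le_add_left (v_natCast hv N) _
    _ = v ((N : Kb) * c) := (hv.map_mul _ _).symm

lemma mono_le_shift (hv : IsValOnField v) (b : Kb) (δ : Λ) (F : Polynomial Kb) (s : ℕ) :
    monoVal v b δ F ≤ ((s • δ : Λ) : WithTop Λ) + monoVal v b δ (hasseDeriv s F) := by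
  by_cases hH : hasseDeriv s F = 0
  · rw [hH, monoVal_zero hv, add_top]
    exact le_top
  · obtain ⟨j, hj, he⟩ := monoVal_exists b δ (hasseDeriv s F)
    rw [he, taylor_hasse_coeff]
    calc monoVal v b δ F
        ≤ v ((taylor b F).coeff (j + s)) + (((j + s) • δ : Λ) : WithTop Λ) :=
          monoVal_le hv b δ F (j + s)
      _ ≤ v (((j + s).choose j : Kb) * (taylor b F).coeff (j + s))
            + (((j + s) • δ : Λ) : WithTop Λ) := add_le_add_left (v_natMul_ge hv _ _) _
      _ = ((s • δ : Λ) : WithTop Λ) + (v (((j + s).choose j : Kb) * (taylor b F).coeff (j + s))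
            + ((j • δ : Λ) : WithTop Λ)) := shift_eq _ _ _ _

lemma mono_mono (hv : IsValOnField v) {a b : Kb} {δ : Λ}
    (hab : (↑δ : WithTop Λ) ≤ v (b - a)) (F : Polynomial Kb) :
    monoVal v a δ F ≤ monoVal v b δ F := by
  apply le_monoVal
  intro j _
  have hT : taylor b F = taylor (b - a) (taylor a F) := by
    rw [taylor_taylor, sub_add_cancel]
  rw [hT, taylor_coeff, eval_eq_sum_range]
  apply le_v_finsetSum_add hv
  intro i _
  rw [hasseDeriv_coeff]
  calc monoVal v a δ F
      ≤ v ((taylor a F).coeff (i + j)) + (((i + j) • δ : Λ) : WithTop Λ) :=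
        monoVal_le hv a δ F (i + j)
    _ = v ((taylor a F).coeff (i + j)) + (((i • δ : Λ) : WithTop Λ) + ((j • δ : Λ) : WithTop Λ)) := by
        rw [add_nsmul, WithTop.coe_add]
    _ = (0 + (v ((taylor a F).coeff (i + j)) + ((i • δ : Λ) : WithTop Λ)))
          + ((j • δ : Λ) : WithTop Λ) := by
        rw [zero_add, add_assoc]
    _ ≤ (v (((i + j).choose j : Kb)) + (v ((taylor a F).coeff (i + j)) + v ((b - a) ^ i)))
          + ((j • δ : Λ) : WithTop Λ) := by
        exact add_le_add_left
          (add_le_add (v_natCast hv _) (add_le_add_right (v_pow_ge hv hab i) _)) _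
    _ = v (((i + j).choose j : Kb) * (taylor a F).coeff (i + j) * (b - a) ^ i)
          + ((j • δ : Λ) : WithTop Λ) := by
        rw [hv.map_mul, hv.map_mul]
        ac_rfl

lemma ball_eq (hv : IsValOnField v) {a b : Kb} {δ : Λ}
    (hab : (↑δ : WithTop Λ) ≤ v (b - a)) : monoVal v a δ = monoVal v b δ := by
  funext F
  refine le_antisymm (mono_mono hv hab F) (mono_mono hv ?_ F)
  rwa [v_sub_comm hv]

end CentersAux

namespace CentersAux

variable {v : AlgebraicClosure K → WithTop Λ}

local notation "Kb" => AlgebraicClosure K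
local notation "φ" => algebraMap K (AlgebraicClosure K)

lemma eps_le (hv : IsValOnField v) (b : Kb) (δ : Λ) (f : Polynomial K) (s : ℕ) :
    resK (monoVal v b δ) f
      ≤ ((s • δ : Λ) : WithTop Λ) + resK (monoVal v b δ) (hasseDeriv s f) := by
  show monoVal v b δ (f.map φ)
      ≤ ((s • δ : Λ) : WithTop Λ) + monoVal v b δ ((hasseDeriv s f).map φ)
  rw [hasse_map]
  exact mono_le_shift hv b δ _ s

lemma eps_root (hv : IsValOnField v) (a : Kb) (δ : Λ) (f : Polynomial K)
    (hf : 0 < f.natDegree) (ha : (f.map φ).eval a = 0) :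
    IsEpsilon (resK (monoVal v a δ)) f δ := by
  have hf0 : f ≠ 0 := fun h => by simp [h] at hf
  have hF0 : f.map φ ≠ 0 := Polynomial.map_ne_zero hf0
  refine ⟨fun s _ _ => eps_le hv a δ f s, ?_⟩
  obtain ⟨s, hsle, he⟩ := monoVal_exists a δ (f.map φ)
  have hne := monoVal_ne_top hv (a := a) (δ := δ) hF0
  have hcs : (taylor a (f.map φ)).coeff s ≠ 0 := by
    intro h0
    apply hne
    rw [he, h0, v_zero hv, top_add]
  have hs1 : 1 ≤ s := by
    rcases Nat.eq_zero_or_pos s with rfl | h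
    · exact absurd (by rwa [taylor_coeff_zero]) hcs
    · exact h
  have hceq : (taylor a (f.map φ)).coeff s = (hasseDeriv s (f.map φ)).eval a := taylor_coeff a (f.map φ) s
  have hHne : hasseDeriv s (f.map φ) ≠ 0 := by
    intro h0
    apply hcs
    rw [hceq, h0, eval_zero]
  have hfs : hasseDeriv s f ≠ 0 := by
    intro h0
    apply hHne
    rw [← hasse_map, h0, Polynomial.map_zero]
  refine ⟨s, hs1, hfs, le_antisymm (eps_le hv a δ f s) ?_⟩
  show ((s • δ : Λ) : WithTop Λ) + monoVal v a δ ((hasseDeriv s f).map φ)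
      ≤ monoVal v a δ (f.map φ)
  rw [hasse_map]
  have h2 : monoVal v a δ (hasseDeriv s (f.map φ)) ≤ v ((taylor a (f.map φ)).coeff s) := by
    have h3 := monoVal_le hv a δ (hasseDeriv s (f.map φ)) 0
    rw [taylor_coeff_zero, ← hceq] at h3
    simpa using h3
  calc ((s • δ : Λ) : WithTop Λ) + monoVal v a δ (hasseDeriv s (f.map φ))
      ≤ ((s • δ : Λ) : WithTop Λ) + v ((taylor a (f.map φ)).coeff s) := add_le_add_right h2 _
    _ = v ((taylor a (f.map φ)).coeff s) + ((s • δ : Λ) : WithTop Λ) := add_comm _ _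
    _ = monoVal v a δ (f.map φ) := he.symm

lemma exists_close_root (hv : IsValOnField v) (b : Kb) (δ : Λ) (f : Polynomial K)
    (hf : 0 < f.natDegree) (heps : IsEpsilon (resK (monoVal v b δ)) f δ) :
    ∃ a : Kb, (f.map φ).eval a = 0 ∧ (↑δ : WithTop Λ) ≤ v (b - a) := by
  classical
  by_contra hcon
  push_neg at hcon
  have hf0 : f ≠ 0 := fun h => by simp [h] at hf
  have hF0 : f.map φ ≠ 0 := Polynomial.map_ne_zero hf0
  set F := f.map φ with hFdef
  set n := F.natDegree with hndef
  have hn1 : 1 ≤ n := by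
    rw [hndef, hFdef, natDegree_map]
    exact hf
  have hsplit : Multiset.card F.roots = n :=
    splits_iff_card_roots.mp (IsAlgClosed.splits F)
  have hfac : Polynomial.C F.leadingCoeff * (F.roots.map fun t => X - Polynomial.C t).prod = F :=
    C_leadingCoeff_mul_prod_multiset_X_sub_C hsplit
  have hlc0 : F.leadingCoeff ≠ 0 := leadingCoeff_ne_zero.mpr hF0
  have hlc : v F.leadingCoeff ≠ ⊤ := fun ht => hlc0 ((hv.eq_top_iff _).1 ht)
  set s : Multiset Kb := F.roots.map (fun t => t - b) with hsdef
  have hcard : Multiset.card s = n := by rw [hsdef, Multiset.card_map, hsplit]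
  have hsmall : ∀ x ∈ s, v x < ↑δ := by
    intro x hx
    obtain ⟨t, ht, rfl⟩ := Multiset.mem_map.mp hx
    have hroot : F.eval t = 0 := isRoot_of_mem_roots ht
    have := hcon t hroot
    rwa [v_sub_comm hv]
  have hXsub : ∀ t : Kb, taylor b (X - Polynomial.C t) = X - Polynomial.C (t - b) := by
    intro t
    rw [map_sub, taylor_X, taylor_C, map_sub]
    ring
  have hTf : taylor b F = Polynomial.C F.leadingCoeff * (s.map fun u => X - Polynomial.C u).prod := by
    conv_lhs => rw [← hfac]
    rw [← taylorAlgHom_apply, map_mul, map_multiset_prod]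
    simp only [taylorAlgHom_apply, taylor_C, Multiset.map_map, Function.comp, hXsub, hsdef]
  have hG : ∀ k, (taylor b F).coeff k
      = F.leadingCoeff * ((s.map fun u => X - Polynomial.C u).prod.coeff k) := by
    intro k
    rw [hTf, coeff_C_mul]
  have hc0 : v ((taylor b F).coeff 0) = v F.leadingCoeff + (s.map v).sum := by
    rw [taylor_coeff_zero]
    conv_lhs => rw [← hfac]
    rw [eval_mul, eval_C, hv.map_mul, eval_multiset_prod, v_multiset_prod hv]
    congr 1
    rw [hsdef, Multiset.map_map, Multiset.map_map, Multiset.map_map]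
    congr 1
    apply Multiset.map_congr rfl
    intro t _
    simp only [Function.comp_apply, eval_sub, eval_X, eval_C]
    rw [v_sub_comm hv]
  have hwne : (s.map v).sum ≠ ⊤ := by
    apply sum_ne_top
    intro x hx
    obtain ⟨u, hu, rfl⟩ := Multiset.mem_map.mp hx
    exact ne_top_of_lt (hsmall u hu)
  have hc0ne : v ((taylor b F).coeff 0) ≠ ⊤ := by
    rw [hc0]
    exact WithTop.add_ne_top.mpr ⟨hlc, hwne⟩
  have hneg1 : ∀ m : ℕ, v ((-1 : Kb) ^ m) = 0 := by
    intro m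
    rcases neg_one_pow_eq_or Kb m with h | h <;> rw [h]
    · exact v_one hv
    · exact v_neg_one hv
  have hclaim : ∀ k, 1 ≤ k →
      v ((taylor b F).coeff 0) < v ((taylor b F).coeff k) + ((k • δ : Λ) : WithTop Λ) := by
    intro k hk1
    by_cases hkn : k ≤ n
    · rw [hG k, Multiset.prod_X_sub_C_coeff s (by rw [hcard]; exact hkn), hcard,
        hv.map_mul, hv.map_mul, hneg1, zero_add, hc0, add_assoc]
      refine WithTop.add_lt_add_left hlc ?_
      rw [Multiset.esymm]
      apply lt_v_sum_add hv _ hwne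
      intro x hx
      obtain ⟨T, hT, rfl⟩ := Multiset.mem_map.mp hx
      obtain ⟨hTle, hTcard⟩ := Multiset.mem_powersetCard.mp hT
      have hsplitw : (s.map v).sum = (T.map v).sum + ((s - T).map v).sum := by
        conv_lhs => rw [← tsub_add_cancel_of_le hTle]
        rw [Multiset.map_add, Multiset.sum_add, add_comm]
      have hTfin : (T.map v).sum ≠ ⊤ := by
        apply sum_ne_top
        intro x hx
        obtain ⟨u, hu, rfl⟩ := Multiset.mem_map.mp hx
        exact ne_top_of_lt (hsmall u (Multiset.mem_of_le hTle hu))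
      have hrest : ((s - T).map v).sum < ((k • δ : Λ) : WithTop Λ) := by
        have hcr : Multiset.card (s - T) = k := by
          rw [Multiset.card_sub hTle, hcard, hTcard]
          omega
        have hne0 : s - T ≠ 0 := by
          intro h0
          rw [h0, Multiset.card_zero] at hcr
          omega
        have := sum_lt_nsmul hv (s - T) hne0
          (fun x hx => hsmall x (Multiset.mem_of_le (Multiset.sub_le_self s T) hx))
        rwa [hcr] at this
      rw [hsplitw, v_multiset_prod hv]
      exact WithTop.add_lt_add_left hTfin hrest
    · rw [show ((taylor b) F).coeff k = 0 from coeff_eq_zero_of_natDegree_lt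
        (by rw [natDegree_taylor]; exact lt_of_not_ge hkn), v_zero hv, top_add]
      exact lt_top_iff_ne_top.mpr hc0ne
  have hmu : monoVal v b δ F = v ((taylor b F).coeff 0) := by
    apply le_antisymm
    · have h3 := monoVal_le hv b δ F 0
      simpa using h3
    · apply le_monoVal
      intro k _
      rcases Nat.eq_zero_or_pos k with rfl | hk1
      · simp
      · exact (hclaim k hk1).le
  obtain ⟨_, s₀, hs01, hds0, heq⟩ := heps
  have hH : (hasseDeriv s₀ f).map φ = hasseDeriv s₀ F := hasse_map s₀ f
  have hHne : hasseDeriv s₀ F ≠ 0 := by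
    rw [← hH]
    exact Polynomial.map_ne_zero hds0
  obtain ⟨j, hjle, hje⟩ := monoVal_exists b δ (hasseDeriv s₀ F)
  have hstrict : monoVal v b δ F
      < ((s₀ • δ : Λ) : WithTop Λ) + monoVal v b δ (hasseDeriv s₀ F) := by
    rw [hje, taylor_hasse_coeff, hmu]
    calc v ((taylor b F).coeff 0)
        < v ((taylor b F).coeff (j + s₀)) + (((j + s₀) • δ : Λ) : WithTop Λ) :=
          hclaim _ (by omega)
      _ ≤ v (((j + s₀).choose j : Kb) * (taylor b F).coeff (j + s₀))
            + (((j + s₀) • δ : Λ) : WithTop Λ) := add_le_add_left (v_natMul_ge hv _ _) _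
      _ = ((s₀ • δ : Λ) : WithTop Λ)
            + (v (((j + s₀).choose j : Kb) * (taylor b F).coeff (j + s₀))
              + ((j • δ : Λ) : WithTop Λ)) := shift_eq _ _ _ _
  have heq' : monoVal v b δ F
      = ((s₀ • δ : Λ) : WithTop Λ) + monoVal v b δ (hasseDeriv s₀ F) := by
    have e1 : resK (monoVal v b δ) f = monoVal v b δ F := rfl
    have e2 : resK (monoVal v b δ) (hasseDeriv s₀ f) = monoVal v b δ (hasseDeriv s₀ F) := by
      show monoVal v b δ ((hasseDeriv s₀ f).map φ) = _
      rw [hH]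
    rw [e1, e2] at heq
    exact heq
  exact absurd heq' (ne_of_lt hstrict)

end CentersAux

/-- for `μ = res_K(v_{b,δ})` and a nonconstant `f ∈ K[x]`,
`ε_μ(f) = δ` iff there is a root `a ∈ K̄` of `f` with `res_K(v_{a,δ}) = μ`. -/
theorem centers
    (v : AlgebraicClosure K → WithTop Λ) (hv : IsValOnField v)
    (hdiv : IsDivisible Λ)
    (b : AlgebraicClosure K) (δ : Λ)
    (f : Polynomial K) (hf : 0 < f.natDegree) :
    IsEpsilon (resK (monoVal v b δ)) f δ ↔
      ∃ a : AlgebraicClosure K, aeval a f = 0 ∧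
        resK (monoVal v a δ) = resK (monoVal v b δ) := by
  constructor
  · intro heps
    obtain ⟨a, ha, hba⟩ := CentersAux.exists_close_root hv b δ f hf heps
    refine ⟨a, ?_, ?_⟩
    · rw [aeval_def, ← eval_map]
      exact ha
    · funext g
      show monoVal v a δ _ = monoVal v b δ _
      rw [CentersAux.ball_eq hv hba]
  · rintro ⟨a, ha, hres⟩
    rw [← hres]
    apply CentersAux.eps_root hv a δ f hf
    rw [eval_map, ← aeval_def]
    exact ha
end
end

section
/- Let μ = res_K(v_{a,δ}) for some (a,δ) ∈ K̄×Λ. For every nonconstant f ∈ K[x]: f has no root in B(a,δ) if and only if ε_μ(f) < δ. Moreover, if f has no root in B(a,δ), then μ(f) = v(f(a)). -/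
open Polynomial

noncomputable section

variable {K Λ : Type*} [Field K] [AddCommGroup Λ] [LinearOrder Λ] [IsOrderedAddMonoid Λ]

namespace NRaux

/-! ### order lemmas -/

theorem nsmul_mono {a b : Λ} (h : a ≤ b) (n : ℕ) : n • a ≤ n • b := by
  induction n with
  | zero => simp
  | succ n ih => rw [succ_nsmul, succ_nsmul]; exact add_le_add ih h

theorem nsmul_strict {a b : Λ} (h : a < b) {n : ℕ} (hn : 1 ≤ n) : n • a < n • b := by
  obtain ⟨m, rfl⟩ := Nat.exists_eq_succ_of_ne_zero (by omega : n ≠ 0)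
  rw [succ_nsmul, succ_nsmul]
  exact add_lt_add_of_le_of_lt (nsmul_mono h.le m) h

theorem nsmul_cancel {a b : Λ} {n : ℕ} (hn : 1 ≤ n) (h : n • a ≤ n • b) : a ≤ b :=
  le_of_not_gt fun hba => absurd h (not_le.2 (nsmul_strict hba hn))

theorem wt_add_lt_right {a b c : WithTop Λ} (h : a < b) (hc : c ≠ ⊤) : a + c < b + c := by
  lift c to Λ using hc
  lift a to Λ using ne_top_of_lt h
  cases b with
  | top => rw [top_add]; exact (WithTop.coe_add a c) ▸ WithTop.coe_lt_top _
  | coe b =>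
    rw [← WithTop.coe_add, ← WithTop.coe_add]
    exact WithTop.coe_lt_coe.2 (add_lt_add_left (WithTop.coe_lt_coe.1 h) c)

theorem wt_add_lt_left {a b c : WithTop Λ} (h : a < b) (hc : c ≠ ⊤) : c + a < c + b := by
  rw [add_comm c a, add_comm c b]; exact wt_add_lt_right h hc

theorem wt_cancel_le {a b c : WithTop Λ} (hc : c ≠ ⊤) (h : a + c ≤ b + c) : a ≤ b :=
  le_of_not_gt fun hba => absurd h (not_le.2 (wt_add_lt_right hba hc))

theorem wt_cancel_lt {a b c : WithTop Λ} (h : a + c < b + c) : a < b :=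
  lt_of_not_ge fun hba => absurd h (not_lt.2 (add_le_add_left hba c))

theorem wt_add_lt_of_lt_of_le {a b c d : WithTop Λ} (ha : a ≠ ⊤) (hc : c ≠ ⊤)
    (hab : a < b) (hcd : c ≤ d) : a + c < b + d := by
  lift a to Λ using ha
  lift c to Λ using hc
  cases b with
  | top => rw [top_add]; exact (WithTop.coe_add a c) ▸ WithTop.coe_lt_top _
  | coe b =>
    cases d with
    | top => rw [add_top]; exact (WithTop.coe_add a c) ▸ WithTop.coe_lt_top _
    | coe d =>
      rw [← WithTop.coe_add, ← WithTop.coe_add]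
      exact WithTop.coe_lt_coe.2
        (add_lt_add_of_lt_of_le (WithTop.coe_lt_coe.1 hab) (WithTop.coe_le_coe.1 hcd))

/-! ### valuation lemmas -/

variable {v : AlgebraicClosure K → WithTop Λ} (hv : IsValOnField v)
include hv

theorem v_ne_top {x : AlgebraicClosure K} (hx : x ≠ 0) : v x ≠ ⊤ :=
  fun h => hx ((hv.eq_top_iff x).1 h)

theorem v_zero : v 0 = ⊤ := (hv.eq_top_iff 0).2 rfl

theorem v_one : v (1 : AlgebraicClosure K) = 0 := by
  have h := hv.map_mul 1 1
  rw [mul_one] at h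
  have h1 : v (1 : AlgebraicClosure K) ≠ ⊤ := v_ne_top hv one_ne_zero
  lift v (1 : AlgebraicClosure K) to Λ using h1 with y hy
  rw [← WithTop.coe_add, WithTop.coe_inj] at h
  rw [left_eq_add.1 h, WithTop.coe_zero]

theorem v_neg (x : AlgebraicClosure K) : v (-x) = v x := by
  have hm1 : v (-1 : AlgebraicClosure K) = 0 := by
    have h := hv.map_mul (-1 : AlgebraicClosure K) (-1)
    rw [neg_mul_neg, one_mul, v_one hv] at h
    have h1 : v (-1 : AlgebraicClosure K) ≠ ⊤ := v_ne_top hv (by norm_num)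
    lift v (-1 : AlgebraicClosure K) to Λ using h1 with y hy
    rw [← WithTop.coe_add, eq_comm, WithTop.coe_eq_zero] at h
    have hy0 : y = 0 := by
      rcases lt_trichotomy y 0 with hlt | he | hgt
      · exact absurd h (ne_of_lt (by simpa using add_lt_add hlt hlt))
      · exact he
      · exact absurd h (ne_of_gt (by simpa using add_lt_add hgt hgt))
    rw [hy0, WithTop.coe_zero]
  calc v (-x) = v ((-1) * x) := by rw [neg_one_mul]
  _ = v (-1) + v x := hv.map_mul _ _
  _ = v x := by rw [hm1, zero_add]

theorem v_nat (n : ℕ) : (0 : WithTop Λ) ≤ v (n : AlgebraicClosure K) := by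
  induction n with
  | zero => rw [Nat.cast_zero, v_zero hv]; exact le_top
  | succ n ih =>
    push_cast
    refine le_trans (le_min ih (le_of_eq (v_one hv).symm)) (hv.min_le_add _ _)

theorem v_sum {ι : Type*} (s : Finset ι) (F : ι → AlgebraicClosure K) :
    (s.inf fun i => v (F i)) ≤ v (∑ i ∈ s, F i) := by
  classical
  induction s using Finset.induction with
  | empty => simp [v_zero hv]
  | insert x s hna ih =>
    rw [Finset.sum_insert hna, Finset.inf_insert]
    exact le_trans (le_min inf_le_left (le_trans inf_le_right ih)) (hv.min_le_add _ _)

theorem v_pow_ge {x : AlgebraicClosure K} {δ : Λ} (hx : (δ : WithTop Λ) ≤ v x) (m : ℕ) :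
    ((m • δ : Λ) : WithTop Λ) ≤ v (x ^ m) := by
  induction m with
  | zero => rw [pow_zero, v_one hv, zero_nsmul, WithTop.coe_zero]
  | succ m ih =>
    rw [pow_succ, hv.map_mul, succ_nsmul, WithTop.coe_add]
    exact add_le_add ih hx


/-- `monoVal` is bounded by each (generalized) term. -/
theorem mono_le (a : AlgebraicClosure K) (δ : Λ) (g : Polynomial (AlgebraicClosure K)) (k : ℕ) :
    monoVal v a δ g ≤ v ((taylor a g).coeff k) + ((k • δ : Λ) : WithTop Λ) := by
  by_cases hk : k ≤ g.natDegree
  · exact Finset.inf_le (Finset.mem_range.2 (Nat.lt_succ_of_le hk))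
  · have hc : (taylor a g).coeff k = 0 := by
      apply coeff_eq_zero_of_natDegree_lt
      rwa [natDegree_taylor, ← not_le]
    rw [hc, v_zero hv, top_add]
    exact le_top

omit hv in
theorem mono_ge (a : AlgebraicClosure K) (δ : Λ) (g : Polynomial (AlgebraicClosure K)) {B : WithTop Λ}
    (h : ∀ k, B ≤ v ((taylor a g).coeff k) + ((k • δ : Λ) : WithTop Λ)) :
    B ≤ monoVal v a δ g :=
  Finset.le_inf fun k _ => h k

omit hv in
theorem taylor_ne_zero' {g : Polynomial (AlgebraicClosure K)} (hg : g ≠ 0)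
    (r : AlgebraicClosure K) : taylor r g ≠ 0 :=
  fun h => hg (taylor_injective r (by simpa using h))

theorem mono_ne_top (a : AlgebraicClosure K) (δ : Λ) {g : Polynomial (AlgebraicClosure K)} (hg : g ≠ 0) :
    monoVal v a δ g ≠ ⊤ := by
  intro htop
  have hle := mono_le hv a δ g g.natDegree
  rw [htop, top_le_iff] at hle
  have hcoeff : (taylor a g).coeff g.natDegree ≠ 0 := by
    have : (taylor a g).coeff ((taylor a g).natDegree) ≠ 0 :=
      leadingCoeff_ne_zero.2 (taylor_ne_zero' hg a)
    rwa [natDegree_taylor] at this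
  exact WithTop.add_ne_top.2 ⟨v_ne_top hv hcoeff, WithTop.coe_ne_top⟩ hle

omit hv in
omit hv in
theorem hasseDeriv_map (s : ℕ) (f : Polynomial K) :
    (hasseDeriv s f).map (algebraMap K (AlgebraicClosure K))
      = hasseDeriv s (f.map (algebraMap K (AlgebraicClosure K))) := by
  ext m
  simp [coeff_map, hasseDeriv_coeff, map_mul]


/-- Key strict inequality: if all roots of `g` lie outside `B(a,δ)`, then the constant
Taylor coefficient strictly dominates all others. -/
theorem strict_aux (a : AlgebraicClosure K) (δ : Λ) :
    ∀ (n : ℕ) (g : Polynomial (AlgebraicClosure K)), g.natDegree ≤ n → g ≠ 0 →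
      (∀ b, g.eval b = 0 → v (b - a) < (δ : WithTop Λ)) →
      ∀ k, 1 ≤ k → v (g.eval a) < v ((taylor a g).coeff k) + ((k • δ : Λ) : WithTop Λ) := by
  have base : ∀ g : Polynomial (AlgebraicClosure K), g.natDegree = 0 → g ≠ 0 →
      ∀ k, 1 ≤ k → v (g.eval a) < v ((taylor a g).coeff k) + ((k • δ : Λ) : WithTop Λ) := by
    intro g hdeg hg k hk
    obtain ⟨c, rfl⟩ := natDegree_eq_zero.1 hdeg
    have hc : c ≠ 0 := fun h => hg (by rw [h, map_zero])
    have h1 : (taylor a (C c)).coeff k = 0 := by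
      rw [taylor_C, coeff_C, if_neg (by omega)]
    rw [h1, v_zero hv, top_add, eval_C]
    exact lt_top_iff_ne_top.2 (v_ne_top hv hc)
  intro n
  induction n with
  | zero =>
    intro g hdeg hg hroot k hk
    exact base g (Nat.le_zero.1 hdeg) hg k hk
  | succ n ih =>
    intro g hdeg hg hroot k hk
    by_cases hdeg0 : g.natDegree = 0
    · exact base g hdeg0 hg k hk
    -- g has a root b
    obtain ⟨b, hb⟩ := IsAlgClosed.exists_root (p := g)
      (by rw [degree_eq_natDegree hg]; exact_mod_cast hdeg0)
    obtain ⟨h, rfl⟩ := (dvd_iff_isRoot.2 hb)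
    have hXb : (X - C b) ≠ 0 := X_sub_C_ne_zero b
    have hh : h ≠ 0 := fun h0 => hg (by rw [h0, mul_zero])
    have hdegh : h.natDegree ≤ n := by
      have := natDegree_mul hXb hh
      rw [natDegree_X_sub_C] at this
      omega
    have hrooth : ∀ b', h.eval b' = 0 → v (b' - a) < (δ : WithTop Λ) := by
      intro b' hb'
      exact hroot b' (by rw [eval_mul, hb', mul_zero])
    -- basic quantities
    set w : AlgebraicClosure K := a - b with hw_def
    have hbroot : v (b - a) < (δ : WithTop Λ) := hroot b (by simp)
    have hw : v w < (δ : WithTop Λ) := by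
      rw [hw_def, ← neg_sub b a, v_neg hv]; exact hbroot
    have hwne : v w ≠ ⊤ := ne_top_of_lt hw
    have hEa : ((X - C b) * h).eval a ≠ 0 := by
      intro h0
      have := hroot a h0
      rw [sub_self, v_zero hv] at this
      exact absurd this not_top_lt
    have heval : ((X - C b) * h).eval a = w * h.eval a := by
      rw [eval_mul, eval_sub, eval_X, eval_C]
    have hha : h.eval a ≠ 0 := by
      intro h0; apply hEa; rw [heval, h0, mul_zero]
    have hu0ne : v (h.eval a) ≠ ⊤ := v_ne_top hv hha
    -- Taylor expansion
    have htay : taylor a ((X - C b) * h) = (X + C w) * taylor a h := by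
      rw [taylor_mul]
      congr 1
      rw [taylor_apply, sub_comp, X_comp, C_comp, hw_def, C_sub]
      ring
    set u : ℕ → AlgebraicClosure K := fun j => (taylor a h).coeff j with hu_def
    have hu0 : u 0 = h.eval a := taylor_coeff_zero a h
    -- coefficient identity
    obtain ⟨m, rfl⟩ := Nat.exists_eq_succ_of_ne_zero (by omega : k ≠ 0)
    have hcoeff : (taylor a ((X - C b) * h)).coeff (m + 1) = u m + w * u (m + 1) := by
      rw [htay, add_mul, coeff_add, coeff_X_mul, coeff_C_mul]
    -- IH facts
    have hIH : ∀ j, 1 ≤ j → v (u 0) < v (u j) + ((j • δ : Λ) : WithTop Λ) := by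
      intro j hj
      rw [hu0]
      exact ih h hdegh hh hrooth j hj
    have hweak : ∀ j, v (u 0) ≤ v (u j) + ((j • δ : Λ) : WithTop Λ) := by
      intro j
      rcases Nat.eq_zero_or_pos j with rfl | hj
      · rw [zero_nsmul, WithTop.coe_zero, add_zero]
      · exact (hIH j hj).le
    -- LHS value
    have hLHS : v (((X - C b) * h).eval a) = v w + v (u 0) := by
      rw [heval, hv.map_mul, hu0]
    -- claim A
    have claimA : v w + v (u 0) < v (u m) + (((m + 1) • δ : Λ) : WithTop Λ) := by
      have := wt_add_lt_of_lt_of_le hwne (hu0 ▸ hu0ne) hw (hweak m)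
      calc v w + v (u 0) < (δ : WithTop Λ) + (v (u m) + ((m • δ : Λ) : WithTop Λ)) := this
        _ = v (u m) + (((m + 1) • δ : Λ) : WithTop Λ) := by
          rw [add_comm ((δ : WithTop Λ)) _, add_assoc, ← WithTop.coe_add, succ_nsmul]
    -- claim B
    have claimB : v w + v (u 0) < (v w + v (u (m + 1))) + (((m + 1) • δ : Λ) : WithTop Λ) := by
      have := wt_add_lt_left (hIH (m + 1) (by omega)) hwne
      rw [← add_assoc] at this
      exact this
    -- conclude
    rw [hLHS, hcoeff]
    have hmin : min (v (u m)) (v (w * u (m + 1))) ≤ v (u m + w * u (m + 1)) :=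
      hv.min_le_add _ _
    have hmul : v (w * u (m + 1)) = v w + v (u (m + 1)) := hv.map_mul _ _
    refine lt_of_lt_of_le ?_ (add_le_add_left hmin _)
    rcases min_cases (v (u m)) (v (w * u (m + 1))) with ⟨hmeq, _⟩ | ⟨hmeq, _⟩ <;> rw [hmeq]
    · exact claimA
    · rw [hmul]; exact claimB


/-- If `g` has no root in the closed ball, `monoVal` of `g` is `v (g.eval a)`. -/
theorem mono_eq_eval (a : AlgebraicClosure K) (δ : Λ) {g : Polynomial (AlgebraicClosure K)}
    (hg : g ≠ 0) (hroot : ∀ b, g.eval b = 0 → v (b - a) < (δ : WithTop Λ)) :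
    monoVal v a δ g = v (g.eval a) := by
  have h0 : v ((taylor a g).coeff 0) + ((0 • δ : Λ) : WithTop Λ) = v (g.eval a) := by
    rw [taylor_coeff_zero, zero_nsmul, WithTop.coe_zero, add_zero]
  apply le_antisymm
  · exact le_trans (mono_le hv a δ g 0) (le_of_eq h0)
  · apply mono_ge a δ g
    intro k
    rcases Nat.eq_zero_or_pos k with rfl | hk
    · exact le_of_eq h0.symm
    · exact (strict_aux hv a δ g.natDegree g le_rfl hg hroot k hk).le

/-- If `g` has no root in the closed ball, then `monoVal g < monoVal (∂ₛ g) + sδ`. -/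
theorem mono_lt_hasse (a : AlgebraicClosure K) (δ : Λ) {g : Polynomial (AlgebraicClosure K)}
    (hg : g ≠ 0) (hroot : ∀ b, g.eval b = 0 → v (b - a) < (δ : WithTop Λ))
    {s : ℕ} (hs : 1 ≤ s) :
    monoVal v a δ g < monoVal v a δ (hasseDeriv s g) + ((s • δ : Λ) : WithTop Λ) := by
  obtain ⟨j, -, hj⟩ := Finset.exists_mem_eq_inf
    (Finset.range ((hasseDeriv s g).natDegree + 1)) (Finset.nonempty_range_iff.2 (by omega))
    (fun k => v ((taylor a (hasseDeriv s g)).coeff k) + ((k • δ : Λ) : WithTop Λ))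
  have hmv : monoVal v a δ (hasseDeriv s g)
      = v ((taylor a (hasseDeriv s g)).coeff j) + ((j • δ : Λ) : WithTop Λ) := hj
  -- identify the coefficient
  have hcomp : hasseDeriv j (hasseDeriv s g) = (j + s).choose j • hasseDeriv (j + s) g := by
    have := LinearMap.congr_fun (hasseDeriv_comp (R := AlgebraicClosure K) j s) g
    simpa using this
  have hco : (taylor a (hasseDeriv s g)).coeff j
      = ((j + s).choose j : AlgebraicClosure K) * (taylor a g).coeff (j + s) := by
    rw [taylor_coeff, hcomp, taylor_coeff]
    rw [nsmul_eq_mul]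
    push_cast
    rw [eval_mul, eval_natCast]
  -- value bound
  have hvge : v ((taylor a g).coeff (j + s))
      ≤ v ((taylor a (hasseDeriv s g)).coeff j) := by
    rw [hco, hv.map_mul]
    calc v ((taylor a g).coeff (j + s)) = 0 + v ((taylor a g).coeff (j + s)) := by
          rw [zero_add]
      _ ≤ _ := add_le_add (v_nat hv _) le_rfl
  have hstrict : v (g.eval a) < v ((taylor a g).coeff (j + s)) + (((j + s) • δ : Λ) : WithTop Λ) :=
    strict_aux hv a δ g.natDegree g le_rfl hg hroot (j + s) (by omega)
  rw [mono_eq_eval hv a δ hg hroot, hmv]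
  calc v (g.eval a) < v ((taylor a g).coeff (j + s)) + (((j + s) • δ : Λ) : WithTop Λ) := hstrict
    _ ≤ v ((taylor a (hasseDeriv s g)).coeff j) + (((j + s) • δ : Λ) : WithTop Λ) :=
        add_le_add hvge le_rfl
    _ = v ((taylor a (hasseDeriv s g)).coeff j)
          + (((j • δ : Λ) : WithTop Λ) + ((s • δ : Λ) : WithTop Λ)) := by
        rw [← WithTop.coe_add, add_nsmul]
    _ = _ := by rw [← add_assoc]

omit hv in
theorem nsmul_cancel_lt {a b : Λ} {n : ℕ} (h : n • a < n • b) : a < b :=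
  lt_of_not_ge fun hba => absurd h (not_lt.2 (nsmul_mono hba n))

end NRaux

open NRaux

/-- for `μ = res_K(v_{a,δ})` and nonconstant `f ∈ K[x]`,
`f` has no root in `B(a,δ)` iff `ε_μ(f) < δ`; moreover, in that case `μ(f) = v(f(a))`. -/
theorem noRootIffEpsilonLt
    (v : AlgebraicClosure K → WithTop Λ) (hv : IsValOnField v)
    (hdiv : IsDivisible Λ)
    (a : AlgebraicClosure K) (δ : Λ)
    (f : Polynomial K) (hf : 0 < f.natDegree) :
    ((∀ c : AlgebraicClosure K, aeval c f = 0 → c ∉ cBall v a δ) ↔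
      ∃ e : Λ, IsEpsilon (resK (monoVal v a δ)) f e ∧ e < δ) ∧
    ((∀ c : AlgebraicClosure K, aeval c f = 0 → c ∉ cBall v a δ) →
      resK (monoVal v a δ) f = v (aeval a f)) := by
  classical
  set φ := algebraMap K (AlgebraicClosure K) with hφ_def
  set g := f.map φ with hg_def
  have hf0 : f ≠ 0 := fun h => by simp [h] at hf
  have hg0 : g ≠ 0 := Polynomial.map_ne_zero hf0
  have hgdeg : g.natDegree = f.natDegree := natDegree_map φ
  have hn1 : 1 ≤ f.natDegree := hf
  set n := f.natDegree with hn_def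
  have hres : ∀ p : Polynomial K, resK (monoVal v a δ) p = monoVal v a δ (p.map φ) :=
    fun _ => rfl
  have haeval : ∀ b : AlgebraicClosure K, aeval b f = g.eval b := by
    intro b; rw [hg_def, eval_map, aeval_def]
  have hroot_iff : (∀ c : AlgebraicClosure K, aeval c f = 0 → c ∉ cBall v a δ) ↔
      (∀ b, g.eval b = 0 → v (b - a) < (δ : WithTop Λ)) := by
    constructor
    · intro H b hb
      have h1 := H b (by rw [haeval]; exact hb)
      simpa [cBall, not_le] using h1
    · intro H c hc
      have h1 := H c (by rw [← haeval]; exact hc)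
      simp only [cBall, Set.mem_setOf_eq, not_le]
      exact h1
  -- no-root implies value at a
  have key_eq : (∀ b, g.eval b = 0 → v (b - a) < (δ : WithTop Λ)) →
      resK (monoVal v a δ) f = v (aeval a f) := by
    intro H
    rw [hres, ← hg_def, mono_eq_eval hv a δ hg0 H, haeval]
  -- no-root implies epsilon exists and < δ
  have key_fwd : (∀ b, g.eval b = 0 → v (b - a) < (δ : WithTop Λ)) →
      ∃ e : Λ, IsEpsilon (resK (monoVal v a δ)) f e ∧ e < δ := by
    intro H
    have hDn : hasseDeriv n f ≠ 0 := by
      intro h0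
      have h1 : (hasseDeriv n f).coeff 0 = 0 := by rw [h0, coeff_zero]
      rw [hasseDeriv_coeff] at h1
      simp only [zero_add, Nat.choose_self, Nat.cast_one, one_mul] at h1
      exact (Polynomial.leadingCoeff_ne_zero.2 hf0) h1
    have hDgt : ∀ s, n < s → hasseDeriv s f = 0 := fun s hs =>
      hasseDeriv_eq_zero_of_lt_natDegree f s hs
    set E := (Finset.range (n + 1)).filter (fun s => 1 ≤ s ∧ hasseDeriv s f ≠ 0) with hE_def
    have hnE : n ∈ E := Finset.mem_filter.2 ⟨Finset.mem_range.2 (by omega), hn1, hDn⟩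
    have hEne : E.Nonempty := ⟨n, hnE⟩
    have hμf_ne : resK (monoVal v a δ) f ≠ ⊤ := by
      rw [hres]; exact mono_ne_top hv a δ hg0
    have hmapD : ∀ s : ℕ, hasseDeriv s f ≠ 0 → (hasseDeriv s f).map φ ≠ 0 := fun s hs =>
      Polynomial.map_ne_zero hs
    have hμs_ne : ∀ s ∈ E, resK (monoVal v a δ) (hasseDeriv s f) ≠ ⊤ := by
      intro s hs
      obtain ⟨-, -, hD⟩ := Finset.mem_filter.1 hs
      rw [hres]
      exact mono_ne_top hv a δ (hmapD s hD)
    have hex : ∀ s ∈ E, ∃ d : Λ, resK (monoVal v a δ) f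
        = ((s • d : Λ) : WithTop Λ) + resK (monoVal v a δ) (hasseDeriv s f) := by
      intro s hs
      obtain ⟨-, hs1, -⟩ := Finset.mem_filter.1 hs
      lift resK (monoVal v a δ) f to Λ using hμf_ne with α hα
      lift resK (monoVal v a δ) (hasseDeriv s f) to Λ using hμs_ne s hs with β hβ
      obtain ⟨d, hd⟩ := hdiv (α - β) s (by omega)
      refine ⟨d, ?_⟩
      rw [← WithTop.coe_add, hd, sub_add_cancel]
    set D : ℕ → Λ := fun s => if h : ∃ d : Λ, resK (monoVal v a δ) f
        = ((s • d : Λ) : WithTop Λ) + resK (monoVal v a δ) (hasseDeriv s f)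
      then h.choose else 0 with hD_def
    have hD : ∀ s ∈ E, resK (monoVal v a δ) f
        = ((s • D s : Λ) : WithTop Λ) + resK (monoVal v a δ) (hasseDeriv s f) := by
      intro s hs
      have h := hex s hs
      simp only [hD_def, dif_pos h]
      exact h.choose_spec
    have hDlt : ∀ s ∈ E, D s < δ := by
      intro s hs
      obtain ⟨-, hs1, hD0⟩ := Finset.mem_filter.1 hs
      have hlt : resK (monoVal v a δ) f
          < resK (monoVal v a δ) (hasseDeriv s f) + ((s • δ : Λ) : WithTop Λ) := by
        rw [hres f, hres (hasseDeriv s f), hasseDeriv_map, ← hg_def]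
        exact mono_lt_hasse hv a δ hg0 H hs1
      rw [hD s hs, add_comm (resK (monoVal v a δ) (hasseDeriv s f))
        (((s • δ : Λ) : WithTop Λ))] at hlt
      have h2 := wt_cancel_lt hlt
      exact nsmul_cancel_lt (WithTop.coe_lt_coe.1 h2)
    refine ⟨E.sup' hEne D, ⟨?_, ?_⟩, ?_⟩
    · intro s hs1 hD0
      have hsn : s ≤ n := by
        by_contra hc
        exact hD0 (hDgt s (by omega))
      have hsE : s ∈ E := Finset.mem_filter.2 ⟨Finset.mem_range.2 (by omega), hs1, hD0⟩
      rw [hD s hsE]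
      exact add_le_add (WithTop.coe_le_coe.2 (nsmul_mono (Finset.le_sup' D hsE) s)) le_rfl
    · obtain ⟨s0, hs0E, hs0⟩ := Finset.exists_mem_eq_sup' hEne D
      obtain ⟨-, hs01, hs0D⟩ := Finset.mem_filter.1 hs0E
      refine ⟨s0, hs01, hs0D, ?_⟩
      rw [hs0]
      exact hD s0 hs0E
    · exact (Finset.sup'_lt_iff hEne).2 hDlt
  -- epsilon < δ implies no root
  have key_bwd : (∃ e : Λ, IsEpsilon (resK (monoVal v a δ)) f e ∧ e < δ) →
      ∀ b, g.eval b = 0 → v (b - a) < (δ : WithTop Λ) := by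
    rintro ⟨e, heps, helt⟩ c hc0
    by_contra hnot
    push_neg at hnot
    set h := taylor c g with hh_def
    have hh0 : h ≠ 0 := taylor_ne_zero' hg0 c
    have hhdeg : h.natDegree = n := by rw [hh_def, natDegree_taylor, hgdeg]
    have hu0 : h.coeff 0 = 0 := by rw [hh_def, taylor_coeff_zero, hc0]
    have hun : h.coeff n ≠ 0 := by
      have h1 : h.coeff h.natDegree ≠ 0 := Polynomial.leadingCoeff_ne_zero.2 hh0
      rwa [hhdeg] at h1
    have hSne : (Finset.Icc 1 n).Nonempty := ⟨n, Finset.mem_Icc.2 ⟨hn1, le_rfl⟩⟩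
    obtain ⟨s, hsS, hsmin⟩ := Finset.exists_mem_eq_inf' hSne
      (fun k => v (h.coeff k) + ((k • δ : Λ) : WithTop Λ))
    obtain ⟨hs1, hsn⟩ := Finset.mem_Icc.1 hsS
    have hMle : ∀ k, v (h.coeff s) + ((s • δ : Λ) : WithTop Λ)
        ≤ v (h.coeff k) + ((k • δ : Λ) : WithTop Λ) := by
      intro k
      rcases Nat.eq_zero_or_pos k with rfl | hk1
      · rw [hu0, v_zero hv, top_add]; exact le_top
      rcases le_or_gt k n with hkn | hkn
      · exact hsmin ▸ Finset.inf'_le _ (Finset.mem_Icc.2 ⟨hk1, hkn⟩)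
      · rw [coeff_eq_zero_of_natDegree_lt (by omega : h.natDegree < k), v_zero hv, top_add]
        exact le_top
    have hMne : v (h.coeff s) ≠ ⊤ := by
      intro htop
      have h1 := hMle n
      rw [htop, top_add, top_le_iff] at h1
      exact WithTop.add_ne_top.2 ⟨v_ne_top hv hun, WithTop.coe_ne_top⟩ h1
    have hus : h.coeff s ≠ 0 := fun h0 => hMne (by rw [h0, v_zero hv])
    have hvac : (δ : WithTop Λ) ≤ v (a - c) := by
      rw [← neg_sub c a, v_neg hv]; exact hnot
    have hvca : (δ : WithTop Λ) ≤ v (c - a) := hnot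
    have htayg : taylor a g = taylor (a - c) h := by
      rw [hh_def, taylor_taylor, sub_add_cancel]
    -- claim A : M ≤ monoVal g
    have claimA : v (h.coeff s) + ((s • δ : Λ) : WithTop Λ) ≤ monoVal v a δ g := by
      apply mono_ge a δ g
      intro j
      have hco : (taylor a g).coeff j = (hasseDeriv j h).eval (a - c) := by
        rw [htayg, taylor_coeff]
      have heq : (hasseDeriv j h).eval (a - c) = ∑ i ∈ Finset.range
          ((hasseDeriv j h).natDegree + 1), (hasseDeriv j h).coeff i * (a - c) ^ i :=
        eval_eq_sum_range _
      have hsum := v_sum hv (Finset.range ((hasseDeriv j h).natDegree + 1))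
        (fun i => (hasseDeriv j h).coeff i * (a - c) ^ i)
      obtain ⟨i, -, hieq⟩ := Finset.exists_mem_eq_inf
        (Finset.range ((hasseDeriv j h).natDegree + 1))
        (Finset.nonempty_range_iff.2 (Nat.succ_ne_zero _))
        (fun i => v ((hasseDeriv j h).coeff i * (a - c) ^ i))
      rw [hieq] at hsum
      have h1 : v (h.coeff (i + j)) ≤ v ((hasseDeriv j h).coeff i) := by
        have hcoeff : (hasseDeriv j h).coeff i
            = ((i + j).choose j : AlgebraicClosure K) * h.coeff (i + j) := hasseDeriv_coeff j h i
        rw [hcoeff, hv.map_mul]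
        calc v (h.coeff (i + j)) = 0 + v (h.coeff (i + j)) := by rw [zero_add]
          _ ≤ _ := add_le_add (v_nat hv _) le_rfl
      have h2 : ((i • δ : Λ) : WithTop Λ) ≤ v ((a - c) ^ i) := v_pow_ge hv hvac i
      have hfin : v (h.coeff s) + ((s • δ : Λ) : WithTop Λ)
          ≤ v ((hasseDeriv j h).eval (a - c)) + ((j • δ : Λ) : WithTop Λ) := by
        rw [heq]
        calc v (h.coeff s) + ((s • δ : Λ) : WithTop Λ)
            ≤ v (h.coeff (i + j)) + (((i + j) • δ : Λ) : WithTop Λ) := hMle (i + j)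
          _ = v (h.coeff (i + j)) + (((i • δ : Λ) : WithTop Λ) + ((j • δ : Λ) : WithTop Λ)) := by
              rw [← WithTop.coe_add, add_nsmul]
          _ = (v (h.coeff (i + j)) + ((i • δ : Λ) : WithTop Λ)) + ((j • δ : Λ) : WithTop Λ) := by
              rw [add_assoc]
          _ ≤ (v ((hasseDeriv j h).coeff i) + v ((a - c) ^ i)) + ((j • δ : Λ) : WithTop Λ) :=
              add_le_add (add_le_add h1 h2) le_rfl
          _ = v ((hasseDeriv j h).coeff i * (a - c) ^ i) + ((j • δ : Λ) : WithTop Λ) := by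
              rw [hv.map_mul]
          _ ≤ _ := add_le_add hsum le_rfl
      rw [hco]
      exact hfin
    -- claim B : μ(∂ₛ f) ≤ v (h.coeff s)
    have hcs : h.coeff s = (taylor a (hasseDeriv s g)).eval (c - a) := by
      rw [hh_def, taylor_coeff, taylor_eval_sub]
    have claimB : resK (monoVal v a δ) (hasseDeriv s f) ≤ v (h.coeff s) := by
      rw [hres, hasseDeriv_map, ← hg_def, hcs, eval_eq_sum_range]
      set Q := taylor a (hasseDeriv s g) with hQ_def
      have hsum := v_sum hv (Finset.range (Q.natDegree + 1))
        (fun i => Q.coeff i * (c - a) ^ i)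
      obtain ⟨i, -, hieq⟩ := Finset.exists_mem_eq_inf (Finset.range (Q.natDegree + 1))
        (Finset.nonempty_range_iff.2 (Nat.succ_ne_zero _))
        (fun i => v (Q.coeff i * (c - a) ^ i))
      rw [hieq] at hsum
      refine le_trans ?_ hsum
      rw [hv.map_mul]
      calc monoVal v a δ (hasseDeriv s g)
          ≤ v ((taylor a (hasseDeriv s g)).coeff i) + ((i • δ : Λ) : WithTop Λ) :=
            mono_le hv a δ _ i
        _ ≤ v (Q.coeff i) + v ((c - a) ^ i) := add_le_add le_rfl (v_pow_ge hv hvca i)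
    have hDg : hasseDeriv s g ≠ 0 := by
      intro h0
      apply hus
      rw [hh_def, taylor_coeff, h0, eval_zero]
    have hDsf : hasseDeriv s f ≠ 0 := by
      intro h0
      apply hDg
      rw [← hasseDeriv_map, h0, Polynomial.map_zero]
    have hmune : resK (monoVal v a δ) (hasseDeriv s f) ≠ ⊤ := by
      rw [hres]
      exact mono_ne_top hv a δ (Polynomial.map_ne_zero hDsf)
    have hfinal : resK (monoVal v a δ) (hasseDeriv s f) + ((s • δ : Λ) : WithTop Λ)
        ≤ resK (monoVal v a δ) f := by
      rw [hres f, ← hg_def]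
      exact le_trans (add_le_add claimB le_rfl) claimA
    have hle := heps.1 s hs1 hDsf
    have hchain : ((s • δ : Λ) : WithTop Λ) + resK (monoVal v a δ) (hasseDeriv s f)
        ≤ ((s • e : Λ) : WithTop Λ) + resK (monoVal v a δ) (hasseDeriv s f) := by
      rw [add_comm (((s • δ : Λ) : WithTop Λ)) _]
      exact le_trans hfinal hle
    have h3 : ((s • δ : Λ) : WithTop Λ) ≤ ((s • e : Λ) : WithTop Λ) :=
      wt_cancel_le hmune hchain
    have h4 : δ ≤ e := nsmul_cancel hs1 (WithTop.coe_le_coe.1 h3)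
    exact absurd helt (not_lt.2 h4)
  refine ⟨?_, fun H => key_eq (hroot_iff.1 H)⟩
  rw [hroot_iff]
  exact ⟨key_fwd, key_bwd⟩
end
end

section
/- Let μ = res_K(v_{a,δ}) and η = res_K(v_{b,ε}) with μ < η, where b ∈ B(a,δ) and ε > δ. Then t(μ,η) = p_K(Min_K B°(b,δ)); that is, the tangent direction of μ determined by η consists exactly of the minimal polynomials over K of the elements of the open ball B°(b,δ) of minimal degree over K. -/
open Polynomial

noncomputable section

variable {K Λ : Type*} [Field K] [AddCommGroup Λ] [LinearOrder Λ] [IsOrderedAddMonoid Λ]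

/-- The tangent direction `t(μ,η)`: monic polynomials of smallest degree `φ` with `μ(φ) < η(φ)`. -/
def tangentDir (μ η : Polynomial K → WithTop Λ) : Set (Polynomial K) :=
  {φ | φ.Monic ∧ μ φ < η φ ∧
    ∀ ψ : Polynomial K, ψ.Monic → μ ψ < η ψ → φ.natDegree ≤ ψ.natDegree}

set_option linter.unusedSectionVars false

namespace AuxVal

theorem coe_sub_le_iff {m γ : Λ} {x : WithTop Λ} :
    (↑(m - γ) : WithTop Λ) ≤ x ↔ (m : WithTop Λ) ≤ x + ↑γ := by
  cases x with
  | top => simp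
  | coe y =>
      rw [← WithTop.coe_add, WithTop.coe_le_coe, WithTop.coe_le_coe]
      exact sub_le_iff_le_add

variable {v : AlgebraicClosure K → WithTop Λ} (hv : IsValOnField v)
include hv

theorem v_zero : v 0 = ⊤ := (hv.eq_top_iff 0).2 rfl

theorem v_one : v 1 = 0 := by
  have h := hv.map_mul 1 1
  rw [one_mul] at h
  have h1 : v 1 ≠ ⊤ := by
    intro ht; exact one_ne_zero ((hv.eq_top_iff 1).1 ht)
  lift v 1 to Λ using h1 with x hx
  rw [← WithTop.coe_add, WithTop.coe_eq_coe] at h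
  have : x = 0 := add_eq_left.1 h.symm
  exact_mod_cast this

theorem v_neg (x : AlgebraicClosure K) : v (-x) = v x := by
  have hm : v (-1 : AlgebraicClosure K) = 0 := by
    have h := hv.map_mul (-1) (-1)
    rw [neg_mul_neg, one_mul, v_one hv] at h
    have h1 : v (-1 : AlgebraicClosure K) ≠ ⊤ := by
      intro ht
      exact one_ne_zero (neg_eq_zero.1 ((hv.eq_top_iff (-1)).1 ht))
    lift v (-1 : AlgebraicClosure K) to Λ using h1 with y hy
    rw [← WithTop.coe_add] at h
    rw [← WithTop.coe_zero] at h ⊢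
    rw [WithTop.coe_eq_coe] at h ⊢
    have h2 : y + y = 0 := h.symm
    rcases lt_trichotomy y 0 with hy0 | hy0 | hy0
    · exact absurd h2 (ne_of_lt (add_neg hy0 hy0))
    · exact hy0
    · exact absurd h2 (ne_of_gt (add_pos hy0 hy0))
  calc v (-x) = v ((-1) * x) := by rw [neg_one_mul]
    _ = v (-1) + v x := hv.map_mul _ _
    _ = v x := by rw [hm, zero_add]

theorem v_sub_comm (x y : AlgebraicClosure K) : v (x - y) = v (y - x) := by
  rw [← v_neg hv (x - y), neg_sub]

theorem v_add_ge (x y : AlgebraicClosure K) {γ : WithTop Λ} (hx : γ ≤ v x) (hy : γ ≤ v y) :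
    γ ≤ v (x + y) := le_trans (le_min hx hy) (hv.min_le_add x y)

theorem v_add_eq_left {x y : AlgebraicClosure K} (h : v x < v y) : v (x + y) = v x := by
  have h1 : v x ≤ v (x + y) := v_add_ge hv x y le_rfl h.le
  rcases lt_or_eq_of_le h1 with h2 | h2
  · exfalso
    have hx : x = (x + y) + (-y) := by ring
    have h3 : min (v (x + y)) (v y) ≤ v x := by
      calc min (v (x + y)) (v y) = min (v (x + y)) (v (-y)) := by rw [v_neg hv]
        _ ≤ v ((x + y) + (-y)) := hv.min_le_add _ _
        _ = v x := by rw [← hx]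
    exact absurd h3 (not_le_of_gt (lt_min h2 h))
  · exact h2.symm

theorem v_sum_ge {γ : WithTop Λ} (t : Multiset (AlgebraicClosure K))
    (h : ∀ x ∈ t, γ ≤ v x) : γ ≤ v t.sum := by
  induction t using Multiset.induction_on with
  | empty => rw [Multiset.sum_zero, v_zero hv]; exact le_top
  | cons y u ih =>
      rw [Multiset.sum_cons]
      exact v_add_ge hv _ _ (h y (Multiset.mem_cons_self y u))
        (ih fun x hx => h x (Multiset.mem_cons_of_mem hx))

theorem v_prod (t : Multiset (AlgebraicClosure K)) :
    v t.prod = (t.map v).sum := by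
  induction t using Multiset.induction_on with
  | empty => simp [v_one hv]
  | cons y u ih => rw [Multiset.prod_cons, hv.map_mul, ih, Multiset.map_cons, Multiset.sum_cons]

theorem v_add_sum_eq {x : AlgebraicClosure K} (t : Multiset (AlgebraicClosure K))
    (h : ∀ y ∈ t, v x < v y) : v (x + t.sum) = v x := by
  induction t using Multiset.induction_on with
  | empty => rw [Multiset.sum_zero, add_zero]
  | cons y u ih =>
      have hxy : x + (y ::ₘ u).sum = (x + u.sum) + y := by
        rw [Multiset.sum_cons]; ring
      have ih' : v (x + u.sum) = v x :=
        ih fun z hz => h z (Multiset.mem_cons_of_mem hz)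
      rw [hxy, v_add_eq_left hv (by rw [ih']; exact h y (Multiset.mem_cons_self y u)), ih']

theorem v_natCast_nonneg (n : ℕ) : (0 : WithTop Λ) ≤ v (n : AlgebraicClosure K) := by
  induction n with
  | zero => simp [v_zero hv]
  | succ m ih =>
      push_cast
      exact v_add_ge hv _ _ ih (by rw [v_one hv])

theorem v_pow_ge {x : AlgebraicClosure K} {δ : Λ} (h : (δ : WithTop Λ) ≤ v x) (n : ℕ) :
    ((n • δ : Λ) : WithTop Λ) ≤ v (x ^ n) := by
  induction n with
  | zero => simp [pow_zero, v_one hv]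
  | succ m ih =>
      rw [pow_succ, hv.map_mul, succ_nsmul]
      push_cast
      exact add_le_add ih h

theorem v_finsetSum_ge {γ : WithTop Λ} {ι : Type*} (s : Finset ι)
    (f : ι → AlgebraicClosure K) (h : ∀ i ∈ s, γ ≤ v (f i)) :
    γ ≤ v (∑ i ∈ s, f i) := by
  classical
  induction s using Finset.induction_on with
  | empty => rw [Finset.sum_empty, v_zero hv]; exact le_top
  | @insert i s hne ih =>
      rw [Finset.sum_insert hne]
      exact v_add_ge hv _ _ (h i (Finset.mem_insert_self i s))
        (ih fun j hj => h j (Finset.mem_insert_of_mem hj))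

omit hv

theorem monoVal_le_of_le {a : AlgebraicClosure K} {δ : Λ} {f : Polynomial (AlgebraicClosure K)}
    {k : ℕ} (hk : k ≤ f.natDegree) :
    monoVal v a δ f ≤ v ((taylor a f).coeff k) + ((k • δ : Λ) : WithTop Λ) :=
  Finset.inf_le (Finset.mem_range.2 (Nat.lt_succ_of_le hk))

theorem le_monoVal {a : AlgebraicClosure K} {δ : Λ} {f : Polynomial (AlgebraicClosure K)}
    {γ : WithTop Λ}
    (h : ∀ k, k ≤ f.natDegree → γ ≤ v ((taylor a f).coeff k) + ((k • δ : Λ) : WithTop Λ)) :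
    γ ≤ monoVal v a δ f :=
  Finset.le_inf fun k hk => h k (Nat.lt_succ_iff.1 (Finset.mem_range.1 hk))

theorem monoVal_le_eval (a : AlgebraicClosure K) (δ : Λ) (f : Polynomial (AlgebraicClosure K)) :
    monoVal v a δ f ≤ v (f.eval a) := by
  have := monoVal_le_of_le (v := v) (a := a) (δ := δ) (f := f) (k := 0) (Nat.zero_le _)
  rwa [Polynomial.taylor_coeff_zero, zero_smul, WithTop.coe_zero, add_zero] at this

include hv

theorem monoVal_le (a : AlgebraicClosure K) (δ : Λ) (f : Polynomial (AlgebraicClosure K))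
    (k : ℕ) : monoVal v a δ f ≤ v ((taylor a f).coeff k) + ((k • δ : Λ) : WithTop Λ) := by
  rcases le_or_gt k f.natDegree with hk | hk
  · exact monoVal_le_of_le hk
  · have hc : (taylor a f).coeff k = 0 :=
      Polynomial.coeff_eq_zero_of_natDegree_lt (by rwa [Polynomial.natDegree_taylor])
    rw [hc, v_zero hv]
    simp

theorem monoVal_ne_top {a : AlgebraicClosure K} {δ : Λ} {f : Polynomial (AlgebraicClosure K)}
    (hf : f ≠ 0) : monoVal v a δ f ≠ ⊤ := by
  intro ht
  have hle := monoVal_le_of_le (v := v) (a := a) (δ := δ) (f := f) (k := f.natDegree) le_rfl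
  rw [ht, top_le_iff] at hle
  have h2 : v ((taylor a f).coeff f.natDegree) = ⊤ := by
    rcases WithTop.add_eq_top.1 hle with h | h
    · exact h
    · exact absurd h (WithTop.coe_ne_top)
  have h3 : (taylor a f).coeff f.natDegree = 0 := (hv.eq_top_iff _).1 h2
  have h4 : (taylor a f) ≠ 0 := fun h0 => hf (Polynomial.taylor_injective a (by simpa using h0))
  have h5 : (taylor a f).natDegree = f.natDegree := Polynomial.natDegree_taylor f a
  exact Polynomial.leadingCoeff_ne_zero.2 h4 (by rwa [Polynomial.leadingCoeff, h5])

theorem monoVal_shift_le {a b : AlgebraicClosure K} {δ : Λ}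
    (hab : (δ : WithTop Λ) ≤ v (b - a)) (f : Polynomial (AlgebraicClosure K)) :
    monoVal v a δ f ≤ monoVal v b δ f := by
  rcases eq_or_ne f 0 with rfl | hf
  · have : monoVal v a δ (0 : Polynomial (AlgebraicClosure K)) = ⊤ := by
      simp [monoVal, v_zero hv]
    rw [this]
    simp [monoVal, v_zero hv]
  obtain ⟨m, hm⟩ := WithTop.ne_top_iff_exists.1 (monoVal_ne_top hv (a := a) (δ := δ) hf)
  rw [← hm]
  apply le_monoVal
  intro j hj
  rw [← coe_sub_le_iff]
  set g := taylor a f with hg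
  have htb : taylor b f = taylor (b - a) g := by
    rw [hg, Polynomial.taylor_taylor, sub_add_cancel]
  rw [htb, Polynomial.taylor_coeff, Polynomial.eval_eq_sum_range]
  apply v_finsetSum_ge hv
  intro n _
  rw [Polynomial.hasseDeriv_coeff]
  rw [coe_sub_le_iff]
  have hterm : v ((↑((n + j).choose j) * g.coeff (n + j)) * (b - a) ^ n)
      = v ((↑((n + j).choose j) : AlgebraicClosure K)) + v (g.coeff (n + j)) + v ((b - a) ^ n) := by
    rw [hv.map_mul, hv.map_mul]
  have h0 : (0 : WithTop Λ) ≤ v ((↑((n + j).choose j) : AlgebraicClosure K)) :=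
    v_natCast_nonneg hv _
  have hpow : ((n • δ : Λ) : WithTop Λ) ≤ v ((b - a) ^ n) := v_pow_ge hv hab n
  have hmono : (↑m : WithTop Λ) ≤ v (g.coeff (n + j)) + (((n + j) • δ : Λ) : WithTop Λ) := by
    have := monoVal_le hv a δ f (n + j)
    rw [← hg] at this
    rw [← hm] at this
    exact this
  calc (↑m : WithTop Λ) ≤ v (g.coeff (n + j)) + (((n + j) • δ : Λ) : WithTop Λ) := hmono
    _ = v (g.coeff (n + j)) + (((n • δ : Λ) : WithTop Λ) + ((j • δ : Λ) : WithTop Λ)) := by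
        rw [← WithTop.coe_add, add_nsmul]
    _ = (0 + (v (g.coeff (n + j)) + ((n • δ : Λ) : WithTop Λ))) + ((j • δ : Λ) : WithTop Λ) := by
        rw [zero_add, add_assoc]
    _ ≤ (v ((↑((n + j).choose j) : AlgebraicClosure K)) +
          (v (g.coeff (n + j)) + v ((b - a) ^ n))) + ((j • δ : Λ) : WithTop Λ) := by
        apply add_le_add_left
        exact add_le_add h0 (add_le_add_right hpow _)
    _ = v ((↑((n + j).choose j) * g.coeff (n + j)) * (b - a) ^ n) + ((j • δ : Λ) : WithTop Λ) := by
        rw [hterm]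
        simp [add_assoc]

theorem monoVal_shift {a b : AlgebraicClosure K} {δ : Λ}
    (hab : (δ : WithTop Λ) ≤ v (b - a)) (f : Polynomial (AlgebraicClosure K)) :
    monoVal v a δ f = monoVal v b δ f :=
  le_antisymm (monoVal_shift_le hv hab f)
    (monoVal_shift_le hv (by rwa [v_sub_comm hv]) f)

omit hv

theorem powersetCard_self {α : Type*} (A : Multiset α) :
    A.powersetCard (Multiset.card A) = {A} := by
  have h1 : Multiset.card (A.powersetCard (Multiset.card A)) = 1 := by
    rw [Multiset.card_powersetCard, Nat.choose_self]
  obtain ⟨T, hT⟩ := Multiset.card_eq_one.1 h1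
  have hA : A ∈ A.powersetCard (Multiset.card A) :=
    Multiset.mem_powersetCard.2 ⟨le_rfl, rfl⟩
  rw [hT] at hA ⊢
  rw [Multiset.mem_singleton] at hA
  rw [hA]

theorem powersetCard_decomp {α : Type*} [DecidableEq α] (A B : Multiset α) :
    ∃ R : Multiset (Multiset α),
      (A + B).powersetCard (Multiset.card A) = A ::ₘ R ∧
      ∀ T ∈ R, ∃ x ∈ T, x ∈ B := by
  induction B using Multiset.induction_on with
  | empty =>
      refine ⟨0, ?_, by simp⟩
      rw [add_zero, powersetCard_self, Multiset.cons_zero]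
  | cons x B ih =>
      obtain ⟨R, hR, hRT⟩ := ih
      rcases Nat.eq_zero_or_pos (Multiset.card A) with h0 | hpos
      · have hA0 : A = 0 := Multiset.card_eq_zero.1 h0
        refine ⟨0, ?_, by simp⟩
        rw [h0, Multiset.powersetCard_zero_left, hA0, Multiset.cons_zero]
      · obtain ⟨n, hn⟩ := Nat.exists_eq_add_of_lt hpos
        rw [zero_add] at hn
        refine ⟨R + (((A + B).powersetCard n).map (x ::ₘ ·)), ?_, ?_⟩
        · rw [Multiset.add_cons, hn, Multiset.powersetCard_cons, ← hn, hR, Multiset.cons_add]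
        · intro T hT
          rcases Multiset.mem_add.1 hT with h | h
          · obtain ⟨y, hy, hyB⟩ := hRT T h
            exact ⟨y, hy, Multiset.mem_cons_of_mem hyB⟩
          · obtain ⟨U, _, hU⟩ := Multiset.mem_map.1 h
            exact ⟨x, by rw [← hU]; exact Multiset.mem_cons_self x U,
              Multiset.mem_cons_self x B⟩

include hv

omit hv in
theorem v_sum_ne_top (t : Multiset (AlgebraicClosure K)) (h : ∀ x ∈ t, v x ≠ ⊤) :
    (t.map v).sum ≠ ⊤ := by
  induction t using Multiset.induction_on with
  | empty => simp
  | cons y u ih =>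
      rw [Multiset.map_cons, Multiset.sum_cons]
      exact WithTop.add_ne_top.2 ⟨h y (Multiset.mem_cons_self y u),
        ih fun x hx => h x (Multiset.mem_cons_of_mem hx)⟩

omit hv

theorem v_sum_le_card_smul {δ : Λ} (t : Multiset (AlgebraicClosure K))
    (h : ∀ x ∈ t, v x ≤ (δ : WithTop Λ)) :
    (t.map v).sum ≤ ((Multiset.card t • δ : Λ) : WithTop Λ) := by
  induction t using Multiset.induction_on with
  | empty => simp
  | cons y u ih =>
      rw [Multiset.map_cons, Multiset.sum_cons, Multiset.card_cons, succ_nsmul', WithTop.coe_add]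
      exact add_le_add (h y (Multiset.mem_cons_self y u))
        (ih fun x hx => h x (Multiset.mem_cons_of_mem hx))

theorem coe_add_lt_add {p p' : Λ} {q q' : WithTop Λ} (h : (p : WithTop Λ) < q)
    (h' : (p' : WithTop Λ) < q') : ((p + p' : Λ) : WithTop Λ) < q + q' := by
  cases q with
  | top => rw [top_add]; exact WithTop.coe_lt_top _
  | coe y =>
      cases q' with
      | top => rw [add_top]; exact WithTop.coe_lt_top _
      | coe y' =>
          rw [← WithTop.coe_add, WithTop.coe_lt_coe] at *
          exact add_lt_add h h'

theorem v_card_smul_lt_sum {δ : Λ} (t : Multiset (AlgebraicClosure K)) (ht : t ≠ 0)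
    (h : ∀ x ∈ t, (δ : WithTop Λ) < v x) :
    ((Multiset.card t • δ : Λ) : WithTop Λ) < (t.map v).sum := by
  induction t using Multiset.induction_on with
  | empty => exact absurd rfl ht
  | cons y u ih =>
      rcases eq_or_ne u 0 with rfl | hu
      · simpa using h y (Multiset.mem_cons_self y 0)
      · rw [Multiset.map_cons, Multiset.sum_cons, Multiset.card_cons, succ_nsmul']
        exact coe_add_lt_add (h y (Multiset.mem_cons_self y u))
          (ih hu fun x hx => h x (Multiset.mem_cons_of_mem hx))

include hv

theorem exchange_lt {δ : Λ} {s T Small : Multiset (AlgebraicClosure K)}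
    (hSmall : Small = s.filter (fun x => v x ≤ (δ : WithTop Λ)))
    (hT : T ≤ s) (hcard : Multiset.card T = Multiset.card Small)
    (hbig : ∃ x ∈ T, ¬ v x ≤ (δ : WithTop Λ)) :
    (Small.map v).sum < (T.map v).sum := by
  classical
  set TS := T.filter (fun x => v x ≤ (δ : WithTop Λ)) with hTS
  set TB := T.filter (fun x => ¬ v x ≤ (δ : WithTop Λ)) with hTB
  have hTsplit : TS + TB = T := Multiset.filter_add_not _ T
  have hTSle : TS ≤ Small := by rw [hSmall, hTS]; exact Multiset.filter_le_filter _ hT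
  have hTBne : TB ≠ 0 := by
    obtain ⟨x, hx, hxb⟩ := hbig
    intro h0
    have hxTB : x ∈ TB := by
      rw [hTB]
      exact Multiset.mem_filter.2 ⟨hx, hxb⟩
    rw [h0] at hxTB
    exact Multiset.notMem_zero x hxTB
  have hcomp : Small - TS + TS = Small := tsub_add_cancel_of_le hTSle
  have hcardcomp : Multiset.card (Small - TS) = Multiset.card TB := by
    have h1 : Multiset.card Small = Multiset.card TS + Multiset.card TB := by
      rw [← hcard, ← hTsplit, Multiset.card_add]
    rw [Multiset.card_sub hTSle, h1]
    omega
  have hTSne : ((TS.map v).sum) ≠ ⊤ := by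
    apply v_sum_ne_top
    intro x hx h
    have hx2 := (Multiset.mem_filter.1 hx).2
    rw [h] at hx2
    exact absurd hx2 (by simp)
  have hstep1 : (Small.map v).sum ≤ (TS.map v).sum
      + ((Multiset.card TB • δ : Λ) : WithTop Λ) := by
    calc (Small.map v).sum = ((Small - TS).map v).sum + (TS.map v).sum := by
          conv_lhs => rw [← hcomp]
          rw [Multiset.map_add, Multiset.sum_add]
      _ ≤ ((Multiset.card TB • δ : Λ) : WithTop Λ) + (TS.map v).sum := by
          apply add_le_add_left
          rw [← hcardcomp]
          refine v_sum_le_card_smul (Small - TS) fun x hx => ?_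
          have hxS : x ∈ Small := Multiset.mem_of_le (Multiset.sub_le_self _ _) hx
          rw [hSmall] at hxS
          exact (Multiset.mem_filter.1 hxS).2
      _ = (TS.map v).sum + ((Multiset.card TB • δ : Λ) : WithTop Λ) := add_comm _ _
  have hstep2 : (TS.map v).sum + ((Multiset.card TB • δ : Λ) : WithTop Λ)
      < (TS.map v).sum + (TB.map v).sum := by
    apply WithTop.add_lt_add_left hTSne
    exact v_card_smul_lt_sum TB hTBne fun x hx =>
      lt_of_not_ge (Multiset.mem_filter.1 hx).2
  calc (Small.map v).sum ≤ _ := hstep1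
    _ < (TS.map v).sum + (TB.map v).sum := hstep2
    _ = (T.map v).sum := by rw [← hTsplit, Multiset.map_add, Multiset.sum_add]

omit hv

theorem taylor_eq_prod {b : AlgebraicClosure K} {f : Polynomial (AlgebraicClosure K)}
    (hf : f.Monic) :
    taylor b f = ((f.roots.map (fun r => b - r)).map (fun c => X + C c)).prod := by
  have hsplits : f.Splits := IsAlgClosed.splits f
  conv_lhs => rw [hsplits.eq_prod_roots_of_monic hf]
  rw [Polynomial.taylor_apply, Polynomial.multiset_prod_comp, Multiset.map_map,
    Multiset.map_map]
  congr 1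
  apply Multiset.map_congr rfl
  intro r _
  simp only [Function.comp_apply, Polynomial.sub_comp, Polynomial.X_comp, Polynomial.C_comp]
  rw [sub_eq_add_neg, add_assoc, ← Polynomial.C_neg, ← Polynomial.C_add, ← sub_eq_add_neg]

theorem card_roots_monic {f : Polynomial (AlgebraicClosure K)} (hf : f.Monic) :
    Multiset.card f.roots = f.natDegree := by
  have hsplits : f.Splits := IsAlgClosed.splits f
  have := hsplits.natDegree_eq_card_roots
  rwa [eq_comm] at this

theorem taylor_coeff_formula {b : AlgebraicClosure K} {f : Polynomial (AlgebraicClosure K)}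
    (hf : f.Monic) {k : ℕ} (hk : k ≤ f.natDegree) :
    (taylor b f).coeff k =
      ((((f.roots.map (fun r => b - r)).powersetCard (f.natDegree - k))).map
        Multiset.prod).sum := by
  classical
  set s := f.roots.map (fun r => b - r) with hs
  have hcard : Multiset.card s = f.natDegree := by
    rw [hs, Multiset.card_map, card_roots_monic hf]
  rw [taylor_eq_prod hf, ← hs, Multiset.prod_X_add_C_coeff s (by rwa [hcard]),
    Multiset.esymm, hcard]

theorem eval_eq_prod {b : AlgebraicClosure K} {f : Polynomial (AlgebraicClosure K)}
    (hf : f.Monic) :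
    f.eval b = (f.roots.map (fun r => b - r)).prod := by
  have hsplits : f.Splits := IsAlgClosed.splits f
  conv_lhs => rw [hsplits.eq_prod_roots_of_monic hf]
  rw [Polynomial.eval_multiset_prod, Multiset.map_map]
  congr 1
  apply Multiset.map_congr rfl
  intro r _
  simp

include hv

/-- If `f` is monic with no roots in the open ball around `b`, then
`monoVal v b δ f = v (f.eval b)`. -/
theorem monoVal_eq_eval_of_no_root {b : AlgebraicClosure K} {δ : Λ}
    {f : Polynomial (AlgebraicClosure K)} (hf : f.Monic)
    (hroots : ∀ r ∈ f.roots, v (b - r) ≤ (δ : WithTop Λ)) :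
    monoVal v b δ f = v (f.eval b) := by
  classical
  refine le_antisymm (monoVal_le_eval b δ f) (le_monoVal fun k hk => ?_)
  set s := f.roots.map (fun r => b - r) with hs
  have hsmem : ∀ x ∈ s, v x ≤ (δ : WithTop Λ) := by
    intro x hx
    obtain ⟨r, hr, rfl⟩ := Multiset.mem_map.1 hx
    exact hroots r hr
  have hcard : Multiset.card s = f.natDegree := by
    rw [hs, Multiset.card_map, card_roots_monic hf]
  have heval : f.eval b = s.prod := eval_eq_prod hf
  have hne : f.eval b ≠ 0 := by
    intro h0
    rw [heval] at h0
    have hx0 : (0 : AlgebraicClosure K) ∈ s := Multiset.prod_eq_zero_iff.1 h0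
    have := hsmem 0 hx0
    rw [v_zero hv] at this
    exact absurd this (by simp)
  obtain ⟨E, hE⟩ := WithTop.ne_top_iff_exists.1 (fun h => hne ((hv.eq_top_iff _).1 h))
  rw [← hE, taylor_coeff_formula hf hk, ← coe_sub_le_iff]
  apply v_sum_ge hv
  intro y hy
  obtain ⟨T, hT, rfl⟩ := Multiset.mem_map.1 hy
  obtain ⟨hTle, hTcard⟩ := Multiset.mem_powersetCard.1 hT
  rw [coe_sub_le_iff]
  have hcomp : s - T + T = s := tsub_add_cancel_of_le hTle
  have hcardST : Multiset.card (s - T) = k := by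
    rw [Multiset.card_sub hTle, hTcard, hcard]
    omega
  have hEsum : (E : WithTop Λ) = ((s - T).map v).sum + (T.map v).sum := by
    rw [hE, heval, v_prod hv]
    conv_lhs => rw [← hcomp]
    rw [Multiset.map_add, Multiset.sum_add]
  rw [hEsum, v_prod hv, add_comm]
  apply add_le_add_right
  rw [← hcardST]
  refine v_sum_le_card_smul (s - T) fun x hx => ?_
  exact hsmem x (Multiset.mem_of_le (Multiset.sub_le_self _ _) hx)

/-- If `f` is monic with a root in the open ball around `b`, then
`monoVal v b δ f < v (f.eval b)`. -/
theorem monoVal_lt_eval_of_root {b : AlgebraicClosure K} {δ : Λ}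
    {f : Polynomial (AlgebraicClosure K)} (hf : f.Monic)
    {r0 : AlgebraicClosure K} (hr0 : r0 ∈ f.roots) (hr0v : (δ : WithTop Λ) < v (b - r0)) :
    monoVal v b δ f < v (f.eval b) := by
  classical
  set s := f.roots.map (fun r => b - r) with hs
  have hcard : Multiset.card s = f.natDegree := by
    rw [hs, Multiset.card_map, card_roots_monic hf]
  set Small := s.filter (fun x => v x ≤ (δ : WithTop Λ)) with hSmall
  set Big := s.filter (fun x => ¬ v x ≤ (δ : WithTop Λ)) with hBig
  have hsplit : Small + Big = s := Multiset.filter_add_not _ s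
  set k := Multiset.card Big with hk
  have hBigne : Big ≠ 0 := by
    intro h0
    have hx : b - r0 ∈ Big := by
      rw [hBig]
      exact Multiset.mem_filter.2 ⟨Multiset.mem_map_of_mem _ hr0, not_le_of_gt hr0v⟩
    rw [h0] at hx
    exact Multiset.notMem_zero _ hx
  have hkle : k ≤ f.natDegree := by
    rw [hk, ← hcard, ← hsplit, Multiset.card_add]
    omega
  have hSmallcard : Multiset.card Small = f.natDegree - k := by
    have : Multiset.card Small + k = f.natDegree := by
      rw [hk, ← hcard, ← hsplit, Multiset.card_add]
    omega
  -- the ball-decomposition of the k-th coefficient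
  obtain ⟨R, hR, hRT⟩ := powersetCard_decomp Small Big
  have hSmallv : ∀ x ∈ Small, v x ≤ (δ : WithTop Λ) := fun x hx =>
    (Multiset.mem_filter.1 hx).2
  have hSmallne : ((Small.map v).sum) ≠ ⊤ := by
    apply v_sum_ne_top
    intro x hx h
    have := hSmallv x hx
    rw [h] at this
    exact absurd this (by simp)
  obtain ⟨E, hE⟩ := WithTop.ne_top_iff_exists.1 hSmallne
  have hcoeff : (taylor b f).coeff k = Small.prod + (R.map Multiset.prod).sum := by
    rw [taylor_coeff_formula hf hkle, ← hs, ← hSmallcard, ← hsplit, hR, Multiset.map_cons,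
      Multiset.sum_cons]
  have hvcoeff : v ((taylor b f).coeff k) = (E : WithTop Λ) := by
    rw [hcoeff]
    rw [v_add_sum_eq hv]
    · rw [v_prod hv, hE]
    · intro y hy
      obtain ⟨T, hT, rfl⟩ := Multiset.mem_map.1 hy
      have hTmem : T ∈ (Small + Big).powersetCard (Multiset.card Small) := by
        rw [hR]
        exact Multiset.mem_cons_of_mem hT
      rw [hsplit] at hTmem
      obtain ⟨hTle, hTcard⟩ := Multiset.mem_powersetCard.1 hTmem
      rw [v_prod hv, v_prod hv]
      exact exchange_lt hv hSmall hTle (by rw [hTcard]) (by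
        obtain ⟨x, hxT, hxB⟩ := hRT T hT
        exact ⟨x, hxT, (Multiset.mem_filter.1 hxB).2⟩)
  have heval : v (f.eval b) = (E : WithTop Λ) + (Big.map v).sum := by
    rw [eval_eq_prod hf, ← hs, v_prod hv, ← hsplit, Multiset.map_add, Multiset.sum_add, hE]
  calc monoVal v b δ f ≤ v ((taylor b f).coeff k) + ((k • δ : Λ) : WithTop Λ) :=
        monoVal_le_of_le hkle
    _ = (E : WithTop Λ) + ((k • δ : Λ) : WithTop Λ) := by rw [hvcoeff]
    _ < (E : WithTop Λ) + (Big.map v).sum := by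
        apply WithTop.add_lt_add_left (WithTop.coe_ne_top)
        exact v_card_smul_lt_sum Big hBigne fun x hx =>
          lt_of_not_ge (Multiset.mem_filter.1 hx).2
    _ = v (f.eval b) := heval.symm

omit hv

theorem nsmul_lt_nsmul_of_lt {δ ε : Λ} (h : δ < ε) {k : ℕ} (hk : 1 ≤ k) :
    k • δ < k • ε := by
  induction k with
  | zero => omega
  | succ n ih =>
      rcases Nat.eq_zero_or_pos n with rfl | hn
      · simpa using h
      · rw [succ_nsmul, succ_nsmul]
        exact add_lt_add (ih hn) h

theorem lt_monoVal {a : AlgebraicClosure K} {δ : Λ} {f : Polynomial (AlgebraicClosure K)}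
    {γ : WithTop Λ} (hγ : γ < ⊤)
    (h : ∀ k, k ≤ f.natDegree → γ < v ((taylor a f).coeff k) + ((k • δ : Λ) : WithTop Λ)) :
    γ < monoVal v a δ f := by
  unfold monoVal
  exact (Finset.lt_inf_iff hγ).2 fun k hk => h k (Nat.lt_succ_iff.1 (Finset.mem_range.1 hk))

include hv

theorem monoVal_lt_monoVal_iff {b : AlgebraicClosure K} {δ ε : Λ} (hδε : δ < ε)
    {f : Polynomial (AlgebraicClosure K)} (hf : f.Monic) :
    monoVal v b δ f < monoVal v b ε f ↔
      ∃ r ∈ f.roots, (δ : WithTop Λ) < v (b - r) := by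
  constructor
  · intro h
    by_contra hno
    push_neg at hno
    have heq := monoVal_eq_eval_of_no_root hv hf hno
    have hle := monoVal_le_eval (v := v) b ε f
    rw [← heq] at hle
    exact absurd h (not_lt.2 hle)
  · rintro ⟨r, hr, hrv⟩
    have hμlt := monoVal_lt_eval_of_root hv hf hr hrv
    have hμtop : monoVal v b δ f < ⊤ := lt_of_lt_of_le hμlt le_top
    apply lt_monoVal hμtop
    intro k hk
    rcases Nat.eq_zero_or_pos k with rfl | hk1
    · simpa [Polynomial.taylor_coeff_zero] using hμlt
    · have hle := monoVal_le hv b δ f k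
      cases hvc : v ((taylor b f).coeff k) with
      | top => rw [top_add]; exact hμtop
      | coe x =>
          rw [hvc] at hle
          calc monoVal v b δ f ≤ (x : WithTop Λ) + ((k • δ : Λ) : WithTop Λ) := hle
            _ < (x : WithTop Λ) + ((k • ε : Λ) : WithTop Λ) := by
                rw [← WithTop.coe_add, ← WithTop.coe_add, WithTop.coe_lt_coe]
                exact add_lt_add_right (nsmul_lt_nsmul_of_lt hδε hk1) x

end AuxVal

/-- if `μ = res_K(v_{a,δ}) < η = res_K(v_{b,ε})` with `b ∈ B(a,δ)` and `ε > δ`,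
then `t(μ,η) = p_K(Min_K B°(b,δ))`. -/
theorem tangentDirEqMinpolys
    (v : AlgebraicClosure K → WithTop Λ) (hv : IsValOnField v)
    (hdiv : IsDivisible Λ)
    (a b : AlgebraicClosure K) (δ ε : Λ)
    (hb : b ∈ cBall v a δ) (hδε : δ < ε)
    (hlt : valLT (resK (monoVal v a δ)) (resK (monoVal v b ε))) :
    tangentDir (resK (monoVal v a δ)) (resK (monoVal v b ε)) =
      {φ : Polynomial K | ∃ c ∈ MinK K (oBall v b δ), φ = minpoly K c} := by
  classical
  have hba : (δ : WithTop Λ) ≤ v (b - a) := hb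
  have crit : ∀ φ : Polynomial K, φ.Monic →
      (resK (monoVal v a δ) φ < resK (monoVal v b ε) φ ↔
        ∃ c ∈ oBall v b δ, (Polynomial.aeval c) φ = 0) := by
    intro φ hφ
    set f := φ.map (algebraMap K (AlgebraicClosure K)) with hfdef
    have hf : f.Monic := hφ.map _
    have hf0 : f ≠ 0 := hf.ne_zero
    have hres : resK (monoVal v a δ) φ = monoVal v b δ f :=
      AuxVal.monoVal_shift hv hba f
    have hres2 : resK (monoVal v b ε) φ = monoVal v b ε f := rfl
    rw [hres, hres2, AuxVal.monoVal_lt_monoVal_iff hv hδε hf]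
    constructor
    · rintro ⟨r, hr, hrv⟩
      refine ⟨r, ?_, ?_⟩
      · show (δ : WithTop Λ) < v (r - b)
        rwa [AuxVal.v_sub_comm hv]
      · have h2 := (Polynomial.mem_roots'.1 hr).2
        rw [Polynomial.IsRoot] at h2
        rw [Polynomial.aeval_def, ← Polynomial.eval_map]
        exact h2
    · rintro ⟨c, hc, hc0⟩
      refine ⟨c, ?_, ?_⟩
      · rw [Polynomial.mem_roots']
        refine ⟨hf0, ?_⟩
        rw [Polynomial.IsRoot, hfdef, Polynomial.eval_map, ← Polynomial.aeval_def]
        exact hc0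
      · rw [AuxVal.v_sub_comm hv]
        exact hc
  have hbS : b ∈ oBall v b δ := by
    show (δ : WithTop Λ) < v (b - b)
    rw [sub_self, AuxVal.v_zero hv]
    exact WithTop.coe_lt_top δ
  have himg : (degK K '' oBall v b δ).Nonempty := ⟨degK K b, b, hbS, rfl⟩
  obtain ⟨c0, hc0S, hc0e⟩ := Nat.sInf_mem himg
  have hint : ∀ c : AlgebraicClosure K, IsIntegral K c := fun c =>
    Algebra.IsIntegral.isIntegral c
  have hminlt : ∀ c ∈ oBall v b δ,
      resK (monoVal v a δ) (minpoly K c) < resK (monoVal v b ε) (minpoly K c) := fun c hc =>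
    (crit _ (minpoly.monic (hint c))).2 ⟨c, hc, minpoly.aeval K c⟩
  ext φ
  constructor
  · rintro ⟨hmon, hltφ, hmin⟩
    obtain ⟨r, hrS, hr0⟩ := (crit φ hmon).1 hltφ
    have hdvd : minpoly K r ∣ φ := minpoly.dvd K r hr0
    have hdegle : φ.natDegree ≤ (minpoly K r).natDegree :=
      hmin _ (minpoly.monic (hint r)) (hminlt r hrS)
    have heq : φ = minpoly K r :=
      Polynomial.eq_of_monic_of_dvd_of_natDegree_le (minpoly.monic (hint r)) hmon hdvd hdegle
    refine ⟨r, ⟨hrS, ?_⟩, heq⟩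
    refine le_antisymm ?_ (Nat.sInf_le ⟨r, hrS, rfl⟩)
    have h1 : φ.natDegree ≤ (minpoly K c0).natDegree :=
      hmin _ (minpoly.monic (hint c0)) (hminlt c0 hc0S)
    calc degK K r = φ.natDegree := by rw [heq]; rfl
      _ ≤ (minpoly K c0).natDegree := h1
      _ = degKSet K (oBall v b δ) := hc0e
  · rintro ⟨c, ⟨hcS, hcdeg⟩, rfl⟩
    refine ⟨minpoly.monic (hint c), hminlt c hcS, ?_⟩
    intro ψ hψm hψlt
    obtain ⟨r, hrS, hr0⟩ := (crit ψ hψm).1 hψlt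
    calc (minpoly K c).natDegree = degKSet K (oBall v b δ) := hcdeg
      _ ≤ degK K r := Nat.sInf_le ⟨r, hrS, rfl⟩
      _ ≤ ψ.natDegree :=
          Polynomial.natDegree_le_of_dvd (minpoly.dvd K r hr0) hψm.ne_zero
end
end

section
/- Let μ < η be valuations on K[x] and let Q ∈ K[x] be an abstract key polynomial for μ such that μ(Q) = η(Q). Then Q is an abstract key polynomial for η. -/
open Polynomial

noncomputable section

variable {K Λ : Type*} [Field K] [AddCommGroup Λ] [LinearOrder Λ] [IsOrderedAddMonoid Λ]

section AKPHelpers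

variable {v : AlgebraicClosure K → WithTop Λ} {μ η : Polynomial K → WithTop Λ}

lemma vp_zero (hμ : IsValOnPoly v μ) : μ 0 = ⊤ := (hμ.eq_top_iff 0).2 rfl

lemma vp_ne_top (hμ : IsValOnPoly v μ) {f : Polynomial K} (hf : f ≠ 0) : μ f ≠ ⊤ :=
  fun h => hf ((hμ.eq_top_iff f).1 h)

lemma vp_one (hμ : IsValOnPoly v μ) : μ 1 = 0 := by
  have h := hμ.map_mul 1 1
  rw [one_mul] at h
  obtain ⟨a, ha⟩ := WithTop.ne_top_iff_exists.1 (vp_ne_top hμ (one_ne_zero (α := Polynomial K)))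
  rw [← ha, ← WithTop.coe_add, WithTop.coe_eq_coe] at h
  rw [← ha, left_eq_add.1 h, WithTop.coe_zero]

lemma vp_neg (hμ : IsValOnPoly v μ) (f : Polynomial K) : μ (-f) = μ f := by
  have hm1 : μ (-1 : Polynomial K) = 0 := by
    have h := hμ.map_mul (-1) (-1)
    rw [neg_one_mul, neg_neg, vp_one hμ] at h
    obtain ⟨a, ha⟩ := WithTop.ne_top_iff_exists.1
      (vp_ne_top hμ (neg_ne_zero.2 (one_ne_zero (α := Polynomial K))))
    rw [← ha, ← WithTop.coe_add, ← WithTop.coe_zero, WithTop.coe_eq_coe] at h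
    have ha0 : a = 0 := by
      rcases lt_trichotomy a 0 with hlt | he | hgt
      · exact absurd h.symm (ne_of_lt (by simpa using add_lt_add hlt hlt))
      · exact he
      · exact absurd h.symm (ne_of_gt (by simpa using add_lt_add hgt hgt))
    rw [← ha, ha0, WithTop.coe_zero]
  rw [← neg_one_mul, hμ.map_mul, hm1, zero_add]

lemma vp_min_le (hμ : IsValOnPoly v μ) (a b : Polynomial K) :
    min (μ (a + b)) (μ a) ≤ μ b := by
  have hab : a + b + -a = b := by ring
  have h := hμ.min_le_add (a + b) (-a)
  rwa [vp_neg hμ, hab] at h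

lemma vp_sum {ι : Type*} (hμ : IsValOnPoly v μ) (t : Finset ι) (F : ι → Polynomial K)
    (c d : WithTop Λ) :
    (∀ i ∈ t, c ≤ d + μ (F i)) → c ≤ d + μ (∑ i ∈ t, F i) := by
  classical
  induction t using Finset.induction_on with
  | empty => intro _; simp [vp_zero hμ]
  | @insert a s hns ih =>
    intro h
    rw [Finset.sum_insert hns]
    have h1 := h a (Finset.mem_insert_self a s)
    have h2 := ih (fun i hi => h i (Finset.mem_insert_of_mem hi))
    have hmin := hμ.min_le_add (F a) (∑ i ∈ s, F i)
    rcases le_total (μ (F a)) (μ (∑ i ∈ s, F i)) with hle' | hle'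
    · rw [min_eq_left hle'] at hmin
      exact h1.trans (add_le_add_right hmin d)
    · rw [min_eq_right hle'] at hmin
      exact h2.trans (add_le_add_right hmin d)

lemma exists_isEpsilon (hμ : IsValOnPoly v μ) (hdiv : IsDivisible Λ)
    {f : Polynomial K} (hf : 0 < f.natDegree) : ∃ e : Λ, IsEpsilon μ f e := by
  classical
  have hf0 : f ≠ 0 := fun h => by simp [h] at hf
  obtain ⟨mf, hmf⟩ := WithTop.ne_top_iff_exists.1 (vp_ne_top hμ hf0)
  have key : ∀ s : ℕ, 1 ≤ s ∧ hasseDeriv s f ≠ 0 →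
      ∃ γ : Λ, μ f = ((s • γ : Λ) : WithTop Λ) + μ (hasseDeriv s f) := by
    rintro s ⟨hs, hne⟩
    obtain ⟨ms, hms⟩ := WithTop.ne_top_iff_exists.1 (vp_ne_top hμ hne)
    obtain ⟨γ, hγ⟩ := hdiv (mf - ms) s hs
    refine ⟨γ, ?_⟩
    rw [← hmf, ← hms, ← WithTop.coe_add, WithTop.coe_eq_coe, hγ]
    abel
  set γfun : ℕ → Λ := fun s =>
    if h : 1 ≤ s ∧ hasseDeriv s f ≠ 0 then Classical.choose (key s h) else 0 with hγfun
  have hspec : ∀ s : ℕ, 1 ≤ s → hasseDeriv s f ≠ 0 →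
      μ f = ((s • γfun s : Λ) : WithTop Λ) + μ (hasseDeriv s f) := by
    intro s hs hne
    have h : 1 ≤ s ∧ hasseDeriv s f ≠ 0 := ⟨hs, hne⟩
    simp only [hγfun, dif_pos h]
    exact Classical.choose_spec (key s h)
  set S : Finset ℕ := (Finset.range (f.natDegree + 1)).filter
      (fun s => 1 ≤ s ∧ hasseDeriv s f ≠ 0) with hS
  have hmemS : ∀ s, s ∈ S ↔ (1 ≤ s ∧ hasseDeriv s f ≠ 0) := by
    intro s
    simp only [hS, Finset.mem_filter, Finset.mem_range]
    refine ⟨fun h => h.2, fun h => ⟨?_, h⟩⟩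
    by_contra hgt
    push_neg at hgt
    exact h.2 (hasseDeriv_eq_zero_of_lt_natDegree f s (by omega))
  have hSne : S.Nonempty := by
    refine ⟨f.natDegree, (hmemS _).2 ⟨hf, ?_⟩⟩
    intro h0
    have hc : (hasseDeriv f.natDegree f).coeff 0 = f.leadingCoeff := by
      rw [hasseDeriv_coeff, zero_add, Nat.choose_self, Nat.cast_one, one_mul]
      rfl
    rw [h0, coeff_zero] at hc
    exact leadingCoeff_ne_zero.2 hf0 hc.symm
  set T : Finset Λ := S.image γfun with hT
  have hTne : T.Nonempty := hSne.image γfun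
  refine ⟨T.max' hTne, ?_, ?_⟩
  · intro s hs hne
    have hsS : s ∈ S := (hmemS s).2 ⟨hs, hne⟩
    have hle : γfun s ≤ T.max' hTne := Finset.le_max' T _ (Finset.mem_image_of_mem γfun hsS)
    calc μ f = ((s • γfun s : Λ) : WithTop Λ) + μ (hasseDeriv s f) := hspec s hs hne
      _ ≤ ((s • T.max' hTne : Λ) : WithTop Λ) + μ (hasseDeriv s f) :=
        add_le_add_left (WithTop.coe_le_coe.2 (nsmul_le_nsmul_right hle s)) _
  · obtain ⟨s, hsS, hγs⟩ := Finset.mem_image.1 (T.max'_mem hTne)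
    obtain ⟨hs, hne⟩ := (hmemS s).1 hsS
    exact ⟨s, hs, hne, by rw [← hγs]; exact hspec s hs hne⟩

lemma eps_congr {f : Polynomial K} (h0 : μ f = η f)
    (hd : ∀ s : ℕ, 1 ≤ s → μ (hasseDeriv s f) = η (hasseDeriv s f)) {e : Λ}
    (h : IsEpsilon η f e) : IsEpsilon μ f e := by
  obtain ⟨h1, s, hs, hne, h2⟩ := h
  refine ⟨fun t ht htne => ?_, s, hs, hne, ?_⟩
  · rw [h0, hd t ht]; exact h1 t ht htne
  · rw [h0, hd s hs]; exact h2

lemma agree_below (hμ : IsValOnPoly v μ) (hη : IsValOnPoly v η) (hdiv : IsDivisible Λ)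
    (hle : valLE μ η) {Q : Polynomial K} (hQ : IsAbstractKeyPol μ Q) (heq : μ Q = η Q) :
    ∀ g : Polynomial K, g.natDegree < Q.natDegree → μ g = η g := by
  classical
  by_contra hcon
  push_neg at hcon
  obtain ⟨g₀, hg₀d, hg₀⟩ := hcon
  have hex : ∃ n, ∃ g : Polynomial K, μ g ≠ η g ∧ g.natDegree = n := ⟨g₀.natDegree, g₀, hg₀, rfl⟩
  set d := Nat.find hex with hd
  obtain ⟨g₁, hg₁ne, hg₁d⟩ := Nat.find_spec hex
  have hmin : ∀ p : Polynomial K, p.natDegree < d → μ p = η p := by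
    intro p hp
    by_contra hne
    have hge : d ≤ p.natDegree := by
      rw [hd]; exact Nat.find_le ⟨p, hne, rfl⟩
    omega
  have hdm : d < Q.natDegree := by
    have hge : d ≤ g₀.natDegree := by
      rw [hd]; exact Nat.find_le ⟨g₀, hg₀, rfl⟩
    omega
  have hd1 : 1 ≤ d := by
    by_contra h0
    push_neg at h0
    have hg₁C : g₁ = C (g₁.coeff 0) := eq_C_of_natDegree_eq_zero (by omega)
    exact hg₁ne (by rw [hg₁C, hμ.extends_v, hη.extends_v])
  have hg₁0 : g₁ ≠ 0 := by
    rintro rfl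
    exact hg₁ne (by rw [vp_zero hμ, vp_zero hη])
  set u := (g₁.leadingCoeff)⁻¹ with hu0
  have hu : u ≠ 0 := inv_ne_zero (leadingCoeff_ne_zero.2 hg₁0)
  have hCu : (C u : Polynomial K) ≠ 0 := fun h => hu (C_eq_zero.1 h)
  set g := g₁ * C u with hgdef
  have hgmonic : g.Monic := by
    rw [hgdef, hu0]; exact monic_mul_leadingCoeff_inv hg₁0
  have hg0 : g ≠ 0 := hgmonic.ne_zero
  have hgdeg : g.natDegree = d := by
    rw [hgdef, natDegree_mul hg₁0 hCu, natDegree_C, add_zero, hg₁d]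
  have hCuv : μ (C u) = η (C u) := by rw [hμ.extends_v, hη.extends_v]
  have hgne : μ g ≠ η g := by
    intro hgg
    apply hg₁ne
    have h1 : μ g₁ + μ (C u) = η g₁ + μ (C u) := by
      rw [← hμ.map_mul, ← hgdef, hgg, hgdef, hη.map_mul, hCuv]
    obtain ⟨cu, hcu⟩ := WithTop.ne_top_iff_exists.1 (vp_ne_top hμ hCu)
    rw [← hcu] at h1
    exact (WithTop.add_right_inj WithTop.coe_ne_top).1 h1
  have hglt : μ g < η g := lt_of_le_of_ne (hle g) hgne
  have hQ0 : Q ≠ 0 := hQ.1.ne_zero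
  have hm0 : 0 < Q.natDegree := by omega
  set q := Q /ₘ g with hq
  set r := Q %ₘ g with hr
  have hdiveq : r + g * q = Q := by rw [hr, hq]; exact modByMonic_add_div Q g
  have hqdeg : q.natDegree = Q.natDegree - d := by
    rw [hq, natDegree_divByMonic Q hgmonic, hgdeg]
  have hq0 : q ≠ 0 := by
    intro h
    rw [h, natDegree_zero] at hqdeg
    omega
  have hrd : r.natDegree < d := by
    rcases eq_or_ne r 0 with h | h
    · rw [h, natDegree_zero]; omega
    · have hdeg2 : r.degree < g.degree := by
        rw [hr]; exact degree_modByMonic_lt Q hgmonic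
      have h2 := natDegree_lt_natDegree h hdeg2
      rw [hgdeg] at h2
      exact h2
  have hrμη : μ r = η r := hmin r hrd
  obtain ⟨ag, hag⟩ := WithTop.ne_top_iff_exists.1 (vp_ne_top hμ hg0)
  obtain ⟨bg, hbg⟩ := WithTop.ne_top_iff_exists.1 (vp_ne_top hη hg0)
  obtain ⟨aq, haq⟩ := WithTop.ne_top_iff_exists.1 (vp_ne_top hμ hq0)
  obtain ⟨bq, hbq⟩ := WithTop.ne_top_iff_exists.1 (vp_ne_top hη hq0)
  have hGlt : μ (g * q) < η (g * q) := by
    have h1 : ag < bg := WithTop.coe_lt_coe.1 (by rw [hag, hbg]; exact hglt)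
    have h2 : aq ≤ bq := WithTop.coe_le_coe.1 (by rw [haq, hbq]; exact hle q)
    rw [hμ.map_mul, hη.map_mul, ← hag, ← hbg, ← haq, ← hbq, ← WithTop.coe_add,
      ← WithTop.coe_add, WithTop.coe_lt_coe]
    exact add_lt_add_of_lt_of_le h1 h2
  have hQeq : g * q + r = Q := by rw [← hdiveq]; ring
  have h1 : min (η Q) (η (g * q)) ≤ η r := by
    have h := vp_min_le hη (g * q) r
    rwa [hQeq] at h
  have hminG : min (μ Q) (μ r) ≤ μ (g * q) := by
    have h := vp_min_le hμ r (g * q)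
    rwa [hdiveq] at h
  have hbr : μ Q ≤ μ r ∧ μ Q ≤ μ (g * q) := by
    rcases le_total (η Q) (η (g * q)) with hAB | hAB
    · have h2 : μ Q ≤ μ r := by
        rw [heq, hrμη]
        exact (le_min le_rfl hAB).trans h1
      rw [min_eq_left h2] at hminG
      exact ⟨h2, hminG⟩
    · have h4 : μ (g * q) < μ r := by
        calc μ (g * q) < η (g * q) := hGlt
          _ ≤ η r := by rw [← min_eq_right hAB]; exact h1
          _ = μ r := hrμη.symm
      have h5 : μ Q ≤ μ (g * q) := by
        rcases le_total (μ Q) (μ r) with h6 | h6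
        · rw [min_eq_left h6] at hminG; exact hminG
        · rw [min_eq_right h6] at hminG
          exact absurd (hminG.trans_lt h4) (lt_irrefl _)
      exact ⟨h5.trans h4.le, h5⟩
  obtain ⟨hQr, hQG⟩ := hbr
  obtain ⟨eQ, hepsQ⟩ := exists_isEpsilon hμ hdiv hm0
  obtain ⟨eg, hepsg⟩ := exists_isEpsilon hμ hdiv (f := g) (by omega)
  obtain ⟨eq', hepsq⟩ := exists_isEpsilon hμ hdiv (f := q) (by omega)
  have hgQlt : eg < eQ := hQ.2 g (by omega) (by omega) eg eQ hepsg hepsQ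
  have hqQlt : eq' < eQ := hQ.2 q (by omega) (by omega) eq' eQ hepsq hepsQ
  obtain ⟨er, herlt, herb⟩ : ∃ er : Λ, er < eQ ∧ ∀ s : ℕ, 1 ≤ s → hasseDeriv s r ≠ 0 →
      μ r ≤ ((s • er : Λ) : WithTop Λ) + μ (hasseDeriv s r) := by
    by_cases hrpos : 0 < r.natDegree
    · obtain ⟨er, heps⟩ := exists_isEpsilon hμ hdiv hrpos
      exact ⟨er, hQ.2 r hrpos (by omega) er eQ heps hepsQ, heps.1⟩
    · refine ⟨eg, hgQlt, fun s hs hne => absurd ?_ hne⟩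
      have hrC : r = C (r.coeff 0) := eq_C_of_natDegree_eq_zero (by omega)
      rw [hrC]
      exact hasseDeriv_C s _ (by omega)
  set E := max (max eg eq') er with hE
  have hElt : E < eQ := max_lt (max_lt hgQlt hqQlt) herlt
  have hegE : eg ≤ E := le_trans (le_max_left _ _) (le_max_left _ _)
  have heqE : eq' ≤ E := le_trans (le_max_right _ _) (le_max_left _ _)
  have herE : er ≤ E := le_max_right _ _
  obtain ⟨s, hs1, hsne, hseq⟩ := hepsQ.2
  have hboundg : ∀ i : ℕ, hasseDeriv i g ≠ 0 →
      μ g ≤ ((i • eg : Λ) : WithTop Λ) + μ (hasseDeriv i g) := by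
    intro i hne
    rcases Nat.eq_zero_or_pos i with rfl | hi
    · simp
    · exact hepsg.1 i hi hne
  have hboundq : ∀ j : ℕ, hasseDeriv j q ≠ 0 →
      μ q ≤ ((j • eq' : Λ) : WithTop Λ) + μ (hasseDeriv j q) := by
    intro j hne
    rcases Nat.eq_zero_or_pos j with rfl | hj
    · simp
    · exact hepsq.1 j hj hne
  have hkey : μ Q ≤ ((s • E : Λ) : WithTop Λ) + μ (hasseDeriv s Q) := by
    have hsplit : hasseDeriv s Q = hasseDeriv s r + hasseDeriv s (g * q) := by
      rw [← hdiveq, map_add]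
    rw [hsplit]
    have hbr2 : μ Q ≤ ((s • E : Λ) : WithTop Λ) + μ (hasseDeriv s r) := by
      by_cases hne : hasseDeriv s r = 0
      · rw [hne, vp_zero hμ, add_top]; exact le_top
      · calc μ Q ≤ μ r := hQr
          _ ≤ ((s • er : Λ) : WithTop Λ) + μ (hasseDeriv s r) := herb s hs1 hne
          _ ≤ ((s • E : Λ) : WithTop Λ) + μ (hasseDeriv s r) :=
              add_le_add_left (WithTop.coe_le_coe.2 (nsmul_le_nsmul_right herE s)) _
    have hbG2 : μ Q ≤ ((s • E : Λ) : WithTop Λ) + μ (hasseDeriv s (g * q)) := by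
      rw [hasseDeriv_mul]
      refine vp_sum hμ _ _ _ _ ?_
      rintro ⟨i, j⟩ hij
      replace hij : i + j = s := by simpa using hij
      by_cases hgi : hasseDeriv i g = 0
      · rw [hgi, zero_mul, vp_zero hμ, add_top]; exact le_top
      by_cases hqj : hasseDeriv j q = 0
      · rw [hqj, mul_zero, vp_zero hμ, add_top]; exact le_top
      have hsE : i • eg + j • eq' ≤ s • E := by
        calc i • eg + j • eq' ≤ i • E + j • E :=
            add_le_add (nsmul_le_nsmul_right hegE i) (nsmul_le_nsmul_right heqE j)
          _ = (i + j) • E := (add_nsmul E i j).symm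
          _ = s • E := by rw [hij]
      calc μ Q ≤ μ (g * q) := hQG
        _ = μ g + μ q := hμ.map_mul g q
        _ ≤ (((i • eg : Λ) : WithTop Λ) + μ (hasseDeriv i g)) +
            (((j • eq' : Λ) : WithTop Λ) + μ (hasseDeriv j q)) :=
            add_le_add (hboundg i hgi) (hboundq j hqj)
        _ = ((i • eg + j • eq' : Λ) : WithTop Λ) +
            (μ (hasseDeriv i g) + μ (hasseDeriv j q)) := by
            rw [WithTop.coe_add, add_add_add_comm]
        _ ≤ ((s • E : Λ) : WithTop Λ) + μ (hasseDeriv i g * hasseDeriv j q) := by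
            rw [hμ.map_mul]
            exact add_le_add_left (WithTop.coe_le_coe.2 hsE) _
    have hminadd := hμ.min_le_add (hasseDeriv s r) (hasseDeriv s (g * q))
    rcases le_total (μ (hasseDeriv s r)) (μ (hasseDeriv s (g * q))) with h7 | h7
    · rw [min_eq_left h7] at hminadd
      exact hbr2.trans (add_le_add_right hminadd _)
    · rw [min_eq_right h7] at hminadd
      exact hbG2.trans (add_le_add_right hminadd _)
  obtain ⟨aQ, haQ⟩ := WithTop.ne_top_iff_exists.1 (vp_ne_top hμ hsne)
  rw [hseq, ← haQ, ← WithTop.coe_add, ← WithTop.coe_add, WithTop.coe_le_coe] at hkey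
  have h8 : s • eQ ≤ s • E := le_of_add_le_add_right hkey
  exact absurd h8 (not_le.2 (nsmul_lt_nsmul_right (by omega) hElt))

end AKPHelpers

/-- if `μ < η`, `Q` is an abstract key polynomial for `μ` and `μ(Q) = η(Q)`,
then `Q` is an abstract key polynomial for `η`. -/
theorem abstractKeyPolClose
    (v : AlgebraicClosure K → WithTop Λ) (hv : IsValOnField v)
    (hdiv : IsDivisible Λ)
    (μ η : Polynomial K → WithTop Λ)
    (hμ : IsValOnPoly v μ) (hη : IsValOnPoly v η)
    (hlt : valLT μ η)
    (Q : Polynomial K) (hQ : IsAbstractKeyPol μ Q) (heq : μ Q = η Q) :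
    IsAbstractKeyPol η Q := by
  obtain ⟨hmonic, hakp⟩ := hQ
  have hagree := agree_below hμ hη hdiv hlt.1 ⟨hmonic, hakp⟩ heq
  refine ⟨hmonic, ?_⟩
  intro f hf0 hfQ e eQ hef heQ2
  have hQpos : 0 < Q.natDegree := lt_trans hf0 hfQ
  have hdf : ∀ s : ℕ, 1 ≤ s → μ (hasseDeriv s f) = η (hasseDeriv s f) := by
    intro s hs
    apply hagree
    have hb := natDegree_hasseDeriv_le f s
    omega
  have hdQ : ∀ s : ℕ, 1 ≤ s → μ (hasseDeriv s Q) = η (hasseDeriv s Q) := by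
    intro s hs
    apply hagree
    have hb := natDegree_hasseDeriv_le Q s
    omega
  exact hakp f hf0 hfQ e eQ (eps_congr (hagree f hfQ) hdf hef) (eps_congr heq hdQ heQ2)
end
end
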